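/- arXiv:1908.09078 — 8 statements merged into one kernel-verified Lean document; each statement's English description precedes it below -/
import Mathlib

section
/- Let A : ℝ^{m×n} → ℝ^p be a linear map and let k ≥ 1 be an integer. Let α = λ_{k,min}(A*A) and β = λ_{k,max}(A*A) be the k-restricted smallest and largest eigenvalues of A*A, and suppose α > 0. Then for all X, Y ∈ ℝ^{m×n} such that the m×2n concatenated matrix [X Y] has rank at most k, one has |(2/(α+β))⟨A(X), A(Y)⟩ − ⟨X, Y⟩| ≤ ((β−α)/(β+α))·‖X‖_F·‖Y‖_F, where ⟨·,·⟩ denotes the trace inner product on ℝ^{m×n} and the standard inner product on ℝ^p. -/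
open scoped BigOperators

noncomputable section

namespace Paper

open Matrix

/-- Euclidean dot product on `ℝ^p`. -/
def vdot {p : ℕ} (y z : Fin p → ℝ) : ℝ := ∑ i, y i * z i

/-- Euclidean norm on `ℝ^p`. -/
def vnorm {p : ℕ} (y : Fin p → ℝ) : ℝ := Real.sqrt (∑ i, (y i) ^ 2)

/-- Trace (Frobenius) inner product of matrices. -/
def finner {m n : ℕ} (X Y : Matrix (Fin m) (Fin n) ℝ) : ℝ := ∑ i, ∑ j, X i j * Y i j

/-- Frobenius norm of a matrix. -/
def fnorm {m n : ℕ} (X : Matrix (Fin m) (Fin n) ℝ) : ℝ := Real.sqrt (∑ i, ∑ j, (X i j) ^ 2)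

/-- Euclidean norm of the `j`-th column of a matrix. -/
def colNorm {m k : ℕ} (U : Matrix (Fin m) (Fin k) ℝ) (j : Fin k) : ℝ :=
  Real.sqrt (∑ i, (U i j) ^ 2)

/-- The `ℓ_{2,0}` norm of a matrix: the number of nonzero columns. -/
def l20 {m k : ℕ} (U : Matrix (Fin m) (Fin k) ℝ) : ℕ :=
  Set.ncard {j : Fin k | (fun i => U i j) ≠ 0}

/-- Number of nonzero entries of a vector. -/
def zeroNorm {k : ℕ} (z : Fin k → ℝ) : ℕ := Set.ncard {i : Fin k | z i ≠ 0}

/-- `k`-restricted smallest eigenvalue of `A*A`. -/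
def lamMin {m n p : ℕ} (A : Matrix (Fin m) (Fin n) ℝ →ₗ[ℝ] (Fin p → ℝ)) (k : ℕ) : ℝ :=
  sInf {t : ℝ | ∃ X : Matrix (Fin m) (Fin n) ℝ, X.rank ≤ k ∧ fnorm X = 1 ∧ t = (vnorm (A X)) ^ 2}

/-- `k`-restricted largest eigenvalue of `A*A`. -/
def lamMax {m n p : ℕ} (A : Matrix (Fin m) (Fin n) ℝ →ₗ[ℝ] (Fin p → ℝ)) (k : ℕ) : ℝ :=
  sSup {t : ℝ | ∃ X : Matrix (Fin m) (Fin n) ℝ, X.rank ≤ k ∧ fnorm X = 1 ∧ t = (vnorm (A X)) ^ 2}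

/-- Operator (spectral) norm of the sampling operator. -/
def opNorm {m n p : ℕ} (A : Matrix (Fin m) (Fin n) ℝ →ₗ[ℝ] (Fin p → ℝ)) : ℝ :=
  sSup {t : ℝ | ∃ X : Matrix (Fin m) (Fin n) ℝ, fnorm X = 1 ∧ t = vnorm (A X)}

/-- Spectral norm of a matrix. -/
def specNorm {a b : ℕ} (U : Matrix (Fin a) (Fin b) ℝ) : ℝ :=
  sSup {t : ℝ | ∃ x : Fin b → ℝ, vnorm x = 1 ∧ t = vnorm (U.mulVec x)}

/-- Adjoint of `A` w.r.t. the trace inner product, applied to `y`. -/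
def adjApply {m n p : ℕ} (A : Matrix (Fin m) (Fin n) ℝ →ₗ[ℝ] (Fin p → ℝ))
    (y : Fin p → ℝ) : Matrix (Fin m) (Fin n) ℝ :=
  fun i j => vdot (A (Matrix.single i j 1)) y

/-- `A*A` applied to a matrix. -/
def AstarA {m n p : ℕ} (A : Matrix (Fin m) (Fin n) ℝ →ₗ[ℝ] (Fin p → ℝ))
    (X : Matrix (Fin m) (Fin n) ℝ) : Matrix (Fin m) (Fin n) ℝ :=
  adjApply A (A X)

/-- Singular values of `X` arranged nonincreasingly, `sigmaFin X 0` the largest. -/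
def sigmaFin {m n : ℕ} (X : Matrix (Fin m) (Fin n) ℝ) : Fin m → ℝ := fun j =>
  Real.sqrt ((Matrix.isHermitian_mul_conjTranspose_self X).eigenvalues
    ((Tuple.sort (Matrix.isHermitian_mul_conjTranspose_self X).eigenvalues) j.rev))

/-- The `i`-th largest singular value (1-indexed); `0` for out-of-range indices. -/
def singularValue {m n : ℕ} (i : ℕ) (X : Matrix (Fin m) (Fin n) ℝ) : ℝ :=
  if h : 1 ≤ i ∧ i ≤ m then sigmaFin X ⟨i - 1, by omega⟩ else 0

/-- The family `𝓛` of proper lsc convex functions `φ : ℝ → (−∞,∞]` with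
`[0,1] ⊆ int(dom φ)`, `φ(1) = 1` and `min_{t ∈ [0,1]} φ(t) = 0` attained at `t*`. -/
structure LFamily where
  phi : ℝ → EReal
  lsc : LowerSemicontinuous phi
  convex : ∀ x y a b : ℝ, 0 ≤ a → 0 ≤ b → a + b = 1 →
    phi (a * x + b * y) ≤ (a : EReal) * phi x + (b : EReal) * phi y
  ne_bot : ∀ x, phi x ≠ ⊥
  icc_subset_interior_dom : Set.Icc (0 : ℝ) 1 ⊆ interior {t : ℝ | phi t ≠ ⊤}
  phi_one : phi 1 = 1
  tstar : ℝ
  tstar_mem : tstar ∈ Set.Icc (0 : ℝ) 1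
  phi_tstar : phi tstar = 0
  phi_nonneg : ∀ t ∈ Set.Icc (0 : ℝ) 1, 0 ≤ phi t

/-- Left derivative of `φ` at `1`, as the supremum of difference quotients. -/
def leftDerivOne (L : LFamily) : ℝ :=
  sSup {q : ℝ | ∃ t : ℝ, 0 ≤ t ∧ t < 1 ∧ q = (1 - (L.phi t).toReal) / (1 - t)}

/-- The function `ψ`: equal to `φ` on `[0,1]` and `+∞` elsewhere. -/
def psi (L : LFamily) (t : ℝ) : EReal := if t ∈ Set.Icc (0 : ℝ) 1 then L.phi t else ⊤

/-- The conjugate `ψ*` of `ψ`. -/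
def psiStar (L : LFamily) (s : ℝ) : EReal := ⨆ t : ℝ, ((s * t : ℝ) : EReal) - psi L t


section Aux

lemma vnorm_sq' {p : ℕ} (y : Fin p → ℝ) : vnorm y ^ 2 = ∑ i, (y i)^2 :=
  Real.sq_sqrt (Finset.sum_nonneg fun _ _ => sq_nonneg _)

lemma fnorm_sq' {m n : ℕ} (X : Matrix (Fin m) (Fin n) ℝ) : fnorm X ^ 2 = ∑ i, ∑ j, (X i j)^2 :=
  Real.sq_sqrt (Finset.sum_nonneg fun _ _ => Finset.sum_nonneg fun _ _ => sq_nonneg _)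

lemma comb_rank' {m n : ℕ} (X Y : Matrix (Fin m) (Fin n) ℝ) (c d : ℝ) :
    (c • X + d • Y).rank ≤ (Matrix.fromCols X Y).rank := by
  have h : c • X + d • Y
      = Matrix.fromCols X Y * Matrix.fromRows (c • (1 : Matrix (Fin n) (Fin n) ℝ)) (d • (1 : Matrix (Fin n) (Fin n) ℝ)) := by
    rw [Matrix.fromCols_mul_fromRows]
    simp [Matrix.mul_smul]
  rw [h]
  exact Matrix.rank_mul_le_left _ _

lemma apply_eq_sum' {m n p : ℕ} (A : Matrix (Fin m) (Fin n) ℝ →ₗ[ℝ] (Fin p → ℝ))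
    (X : Matrix (Fin m) (Fin n) ℝ) (i : Fin p) :
    A X i = ∑ q : Fin m × Fin n, X q.1 q.2 * A (Matrix.single q.1 q.2 1) i := by
  have hX : X = ∑ q : Fin m × Fin n, X q.1 q.2 • Matrix.single q.1 q.2 (1:ℝ) := by
    rw [Fintype.sum_prod_type]
    conv_lhs => rw [Matrix.matrix_eq_sum_single X]
    refine Finset.sum_congr rfl fun a _ => Finset.sum_congr rfl fun b _ => ?_
    rw [Matrix.smul_single, smul_eq_mul, mul_one]
  conv_lhs => rw [hX, map_sum]
  rw [Finset.sum_apply]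
  refine Finset.sum_congr rfl fun q _ => ?_
  rw [_root_.map_smul]
  simp

lemma vnorm_sq_le' {m n p : ℕ} (A : Matrix (Fin m) (Fin n) ℝ →ₗ[ℝ] (Fin p → ℝ))
    (X : Matrix (Fin m) (Fin n) ℝ) :
    vnorm (A X) ^ 2 ≤
      (∑ i : Fin p, ∑ q : Fin m × Fin n, (A (Matrix.single q.1 q.2 1) i)^2)
        * fnorm X ^ 2 := by
  rw [vnorm_sq', fnorm_sq']
  rw [show (∑ i : Fin m, ∑ j : Fin n, (X i j)^2) = ∑ q : Fin m × Fin n, (X q.1 q.2)^2 by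
    rw [Fintype.sum_prod_type]]
  rw [Finset.sum_mul]
  refine Finset.sum_le_sum fun i _ => ?_
  rw [apply_eq_sum' A X i]
  calc (∑ q : Fin m × Fin n, X q.1 q.2 * A (Matrix.single q.1 q.2 1) i)^2
      ≤ (∑ q : Fin m × Fin n, (X q.1 q.2)^2)
          * ∑ q : Fin m × Fin n, (A (Matrix.single q.1 q.2 1) i)^2 :=
        Finset.sum_mul_sq_le_sq_mul_sq _ _ _
    _ = _ := mul_comm _ _

lemma fnorm_smul' {m n : ℕ} (t : ℝ) (X : Matrix (Fin m) (Fin n) ℝ) :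
    fnorm (t • X) = |t| * fnorm X := by
  unfold fnorm
  rw [← Real.sqrt_sq_eq_abs, ← Real.sqrt_mul (sq_nonneg t)]
  congr 1
  simp_rw [Matrix.smul_apply, smul_eq_mul, mul_pow, Finset.mul_sum]

lemma rank_smul_le' {m n : ℕ} (t : ℝ) (X : Matrix (Fin m) (Fin n) ℝ) :
    (t • X).rank ≤ X.rank := by
  have h : t • X = X * (t • (1 : Matrix (Fin n) (Fin n) ℝ)) := by
    rw [Matrix.mul_smul, Matrix.mul_one]
  rw [h]
  exact Matrix.rank_mul_le_left _ _

lemma sandwich' {m n p : ℕ} (A : Matrix (Fin m) (Fin n) ℝ →ₗ[ℝ] (Fin p → ℝ)) (k : ℕ)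
    (Z : Matrix (Fin m) (Fin n) ℝ) (hZ : Z.rank ≤ k) :
    lamMin A k * fnorm Z ^ 2 ≤ vnorm (A Z) ^ 2 ∧
    vnorm (A Z) ^ 2 ≤ lamMax A k * fnorm Z ^ 2 := by
  set S := {t : ℝ | ∃ X : Matrix (Fin m) (Fin n) ℝ,
      X.rank ≤ k ∧ fnorm X = 1 ∧ t = (vnorm (A X)) ^ 2}
  have hbdd_below : BddBelow S := ⟨0, fun t ⟨X, _, _, ht⟩ => ht ▸ sq_nonneg _⟩
  set C := ∑ i : Fin p, ∑ q : Fin m × Fin n, (A (Matrix.single q.1 q.2 1) i)^2 with hC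
  have hbdd_above : BddAbove S := by
    refine ⟨C, fun t ⟨X, _, hX1, ht⟩ => ?_⟩
    have := vnorm_sq_le' A X
    rw [hX1] at this; simpa [ht] using this
  rcases eq_or_ne (fnorm Z) 0 with hz | hz
  · have hZ0 : Z = 0 := by
      have h2 : fnorm Z ^ 2 = 0 := by rw [hz]; ring
      rw [fnorm_sq'] at h2
      ext i j
      have := (Finset.sum_eq_zero_iff_of_nonneg
        (fun _ _ => Finset.sum_nonneg fun _ _ => sq_nonneg _)).mp h2 i (Finset.mem_univ i)
      have := (Finset.sum_eq_zero_iff_of_nonneg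
        (fun _ _ => sq_nonneg _)).mp this j (Finset.mem_univ j)
      simpa [pow_eq_zero_iff] using this
    subst hZ0
    simp [hz, map_zero, vnorm]
  · have hzpos : 0 < fnorm Z := lt_of_le_of_ne (Real.sqrt_nonneg _) (Ne.symm hz)
    set c := fnorm Z
    set W := c⁻¹ • Z with hW
    have hWrank : W.rank ≤ k := le_trans (rank_smul_le' _ _) hZ
    have hWnorm : fnorm W = 1 := by
      rw [hW, fnorm_smul', abs_of_pos (inv_pos.mpr hzpos), inv_mul_cancel₀ (ne_of_gt hzpos)]
    have hmem : vnorm (A W) ^ 2 ∈ S := ⟨W, hWrank, hWnorm, rfl⟩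
    have h1 : lamMin A k ≤ vnorm (A W) ^ 2 := csInf_le hbdd_below hmem
    have h2 : vnorm (A W) ^ 2 ≤ lamMax A k := le_csSup hbdd_above hmem
    have hAW : vnorm (A W) ^ 2 = c⁻¹ ^ 2 * vnorm (A Z) ^ 2 := by
      rw [hW, _root_.map_smul]
      rw [show vnorm (c⁻¹ • A Z) = |c⁻¹| * vnorm (A Z) from ?_]
      · rw [mul_pow, sq_abs]
      · unfold vnorm
        rw [← Real.sqrt_sq_eq_abs, ← Real.sqrt_mul (sq_nonneg _)]
        congr 1
        simp_rw [Pi.smul_apply, smul_eq_mul, mul_pow, Finset.mul_sum]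
    rw [hAW] at h1 h2
    have hc2 : (0:ℝ) < c ^ 2 := by positivity
    have hid : c⁻¹ ^ 2 * vnorm (A Z) ^ 2 * c ^ 2 = vnorm (A Z) ^ 2 := by
      field_simp
    constructor
    · calc lamMin A k * c ^ 2 ≤ (c⁻¹ ^ 2 * vnorm (A Z) ^ 2) * c ^ 2 :=
            mul_le_mul_of_nonneg_right h1 hc2.le
        _ = _ := hid
    · calc vnorm (A Z) ^ 2 = (c⁻¹ ^ 2 * vnorm (A Z) ^ 2) * c ^ 2 := hid.symm
        _ ≤ lamMax A k * c ^ 2 := mul_le_mul_of_nonneg_right h2 hc2.le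

lemma fnorm_comb_sq' {m n : ℕ} (c d : ℝ) (X Y : Matrix (Fin m) (Fin n) ℝ) :
    fnorm (c • X + d • Y) ^ 2
      = c^2 * fnorm X ^ 2 + 2*c*d * finner X Y + d^2 * fnorm Y ^ 2 := by
  rw [fnorm_sq', fnorm_sq', fnorm_sq']
  unfold finner
  have h : ∀ i j, (((c • X + d • Y)) i j)^2
      = c^2*(X i j)^2 + 2*c*d*(X i j * Y i j) + d^2*(Y i j)^2 := by
    intro i j
    have e : (c • X + d • Y) i j = c * X i j + d * Y i j := by simp
    rw [e]; ring
  simp_rw [h, Finset.sum_add_distrib, ← Finset.mul_sum]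

lemma vnorm_comb_sq' {p : ℕ} (c d : ℝ) (v w : Fin p → ℝ) :
    vnorm (c • v + d • w) ^ 2
      = c^2 * vnorm v ^ 2 + 2*c*d * vdot v w + d^2 * vnorm w ^ 2 := by
  rw [vnorm_sq', vnorm_sq', vnorm_sq']
  unfold vdot
  have h : ∀ i, ((c • v + d • w) i)^2
      = c^2*(v i)^2 + 2*c*d*(v i * w i) + d^2*(w i)^2 := by
    intro i
    have e : (c • v + d • w) i = c * v i + d * w i := by simp
    rw [e]; ring
  simp_rw [h, Finset.sum_add_distrib, ← Finset.mul_sum]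

end Aux

/-- restricted condition number bound on inner products (Lemma 2.3). -/
theorem restricted_inner_product_bound
    {m n p : ℕ} (A : Matrix (Fin m) (Fin n) ℝ →ₗ[ℝ] (Fin p → ℝ))
    (k : ℕ) (hk : 1 ≤ k) (α β : ℝ)
    (hα : α = lamMin A k) (hβ : β = lamMax A k) (hαpos : 0 < α) :
    ∀ X Y : Matrix (Fin m) (Fin n) ℝ,
      (Matrix.fromCols X Y).rank ≤ k →
      |2 / (α + β) * vdot (A X) (A Y) - finner X Y| ≤
        (β - α) / (β + α) * (fnorm X * fnorm Y) := by
  intro X Y hXY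
  rcases eq_or_ne (fnorm X) 0 with hx | hx
  · have hX0 : X = 0 := by
      have h2 : fnorm X ^ 2 = 0 := by rw [hx]; ring
      rw [fnorm_sq'] at h2
      ext i j
      have := (Finset.sum_eq_zero_iff_of_nonneg
        (fun _ _ => Finset.sum_nonneg fun _ _ => sq_nonneg _)).mp h2 i (Finset.mem_univ i)
      have := (Finset.sum_eq_zero_iff_of_nonneg
        (fun _ _ => sq_nonneg _)).mp this j (Finset.mem_univ j)
      simpa [pow_eq_zero_iff] using this
    subst hX0
    simp [hx, vdot, finner, map_zero]
  rcases eq_or_ne (fnorm Y) 0 with hy | hy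
  · have hY0 : Y = 0 := by
      have h2 : fnorm Y ^ 2 = 0 := by rw [hy]; ring
      rw [fnorm_sq'] at h2
      ext i j
      have := (Finset.sum_eq_zero_iff_of_nonneg
        (fun _ _ => Finset.sum_nonneg fun _ _ => sq_nonneg _)).mp h2 i (Finset.mem_univ i)
      have := (Finset.sum_eq_zero_iff_of_nonneg
        (fun _ _ => sq_nonneg _)).mp this j (Finset.mem_univ j)
      simpa [pow_eq_zero_iff] using this
    subst hY0
    simp [hy, vdot, finner, map_zero]
  have hapos : 0 < fnorm X := lt_of_le_of_ne (Real.sqrt_nonneg _) (Ne.symm hx)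
  have hbpos : 0 < fnorm Y := lt_of_le_of_ne (Real.sqrt_nonneg _) (Ne.symm hy)
  set a := fnorm X
  set b := fnorm Y
  set u := finner X Y with hu
  set S := vdot (A X) (A Y) with hS
  set P := vnorm (A X) ^ 2 with hP
  set Q := vnorm (A Y) ^ 2 with hQ
  -- sandwich for the three combinations
  have key : ∀ c d : ℝ,
      α * (c^2*a^2 + 2*c*d*u + d^2*b^2) ≤ c^2*P + 2*c*d*S + d^2*Q ∧
      c^2*P + 2*c*d*S + d^2*Q ≤ β * (c^2*a^2 + 2*c*d*u + d^2*b^2) := by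
    intro c d
    have hr : (c • X + d • Y).rank ≤ k := le_trans (comb_rank' X Y c d) hXY
    have hsw := sandwich' A k _ hr
    rw [hα, hβ]
    have hfn := fnorm_comb_sq' c d X Y
    have hA : A (c • X + d • Y) = c • A X + d • A Y := by
      rw [map_add, _root_.map_smul, _root_.map_smul]
    have hvn : vnorm (A (c • X + d • Y)) ^ 2 = c^2*P + 2*c*d*S + d^2*Q := by
      rw [hA, vnorm_comb_sq']
    rw [hfn, hvn] at hsw
    exact hsw
  have hXonly := key 1 0
  have hab : α ≤ β := by nlinarith [hXonly.1, hXonly.2, sq_nonneg a, mul_pos hapos hapos]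
  have hs : 0 < α + β := by linarith
  have hp := key b a
  have hm := key b (-a)
  have habpos : 0 < a * b := mul_pos hapos hbpos
  have keyabs : |2*S - (α+β)*u| ≤ (β-α)*(a*b) := by
    rw [abs_le]
    constructor
    · nlinarith [hp.1, hm.2, habpos, mul_pos habpos habpos]
    · nlinarith [hp.2, hm.1, habpos, mul_pos habpos habpos]
  have e1 : 2 / (α + β) * S - u = (2*S - (α+β)*u) / (α+β) := by
    field_simp
  have e2 : (β - α) / (β + α) * (a * b) = ((β-α)*(a*b)) / (α+β) := by
    rw [add_comm β α]; ring
  rw [e1, e2, abs_div, abs_of_pos hs]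
  exact (div_le_div_iff_of_pos_right hs).mpr keyabs


end Paper
end
end

section
/- Let X ∈ ℝ^{m×n} and let κ be a positive integer with rank(X) ≤ κ. Then rank(X) = min{ (1/2)(‖R‖_{2,0} + ‖L‖_{2,0}) : R ∈ ℝ^{m×κ}, L ∈ ℝ^{n×κ}, X = RLᵀ }, i.e. every factorization X = RLᵀ satisfies (1/2)(‖R‖_{2,0} + ‖L‖_{2,0}) ≥ rank(X), and there exists a factorization X = R̄L̄ᵀ with ‖R̄‖_{2,0} = ‖L̄‖_{2,0} = rank(X). -/
open scoped BigOperators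

noncomputable section

namespace Paper

open Matrix

open Module Submodule

lemma rank_le_l20_aux {a k : ℕ} (U : Matrix (Fin a) (Fin k) ℝ) :
    U.rank ≤ l20 U := by
  classical
  set S : Set (Fin k) := {j : Fin k | (fun i => U i j) ≠ 0} with hS
  have hsub : Set.range Uᵀ ⊆ insert 0 (Uᵀ '' S) := by
    rintro _ ⟨j, rfl⟩
    by_cases h : (fun i => U i j) = 0
    · exact Set.mem_insert_iff.2 (Or.inl (funext fun i => congrFun h i))
    · exact Set.mem_insert_iff.2 (Or.inr ⟨j, h, rfl⟩)
  have hfin : S.Finite := Set.toFinite _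
  have h1 : U.rank = finrank ℝ (span ℝ (Set.range Uᵀ)) := rank_eq_finrank_span_cols U
  have h2 : finrank ℝ (span ℝ (Set.range Uᵀ)) ≤ finrank ℝ (span ℝ (Uᵀ '' S)) := by
    have := Submodule.finrank_mono (span_mono hsub (R := ℝ))
    rwa [span_insert_zero] at this
  have h3 : (Uᵀ '' S) = ↑(hfin.toFinset.image Uᵀ) := by
    erw [Finset.coe_image, Set.Finite.coe_toFinset]
  have h4 : finrank ℝ (span ℝ (Uᵀ '' S)) ≤ (hfin.toFinset.image Uᵀ).card := by
    rw [h3]; exact finrank_span_finset_le_card _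
  have h5 : (hfin.toFinset.image Uᵀ).card ≤ hfin.toFinset.card := Finset.card_image_le
  have h6 : hfin.toFinset.card = S.ncard := (Set.ncard_eq_toFinset_card _ hfin).symm
  have h7 : l20 U = S.ncard := rfl
  omega

lemma ncard_lt_set {κ r : ℕ} (h : r ≤ κ) :
    Set.ncard {j : Fin κ | (j : ℕ) < r} = r := by
  have : {j : Fin κ | (j : ℕ) < r} = Set.range (Fin.castLE h) := by
    ext j
    constructor
    · intro hj; exact ⟨⟨j, hj⟩, rfl⟩
    · rintro ⟨k, rfl⟩; exact k.isLt
  rw [this, ← Set.image_univ, Set.ncard_image_of_injective _ (Fin.castLE_injective h),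
    Set.ncard_univ]
  simp


lemma l20_eq_of {a k r : ℕ} (U : Matrix (Fin a) (Fin k) ℝ) (hrk : r ≤ k)
    (h1 : ∀ j : Fin k, (j : ℕ) < r → (fun i => U i j) ≠ 0)
    (h2 : ∀ j : Fin k, ¬ (j : ℕ) < r → (fun i => U i j) = 0) : l20 U = r := by
  unfold l20
  have hset : {j : Fin k | (fun i => U i j) ≠ 0} = {j : Fin k | (j : ℕ) < r} := by
    ext j
    constructor
    · intro hj
      by_contra h
      exact hj (h2 j h)
    · exact fun h => h1 j h
  rw [hset, ncard_lt_set hrk]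

/-- the rank equals the minimal half-sum of `ℓ_{2,0}` norms of factors
(Lemma 2.4). -/
theorem rank_eq_min_l20_factorization
    {m n : ℕ} (X : Matrix (Fin m) (Fin n) ℝ) (κ : ℕ) (hκ : 1 ≤ κ)
    (hrank : X.rank ≤ κ) :
    (∀ (R : Matrix (Fin m) (Fin κ) ℝ) (L : Matrix (Fin n) (Fin κ) ℝ),
        X = R * Lᵀ → (X.rank : ℝ) ≤ (1 / 2) * ((l20 R : ℝ) + (l20 L : ℝ))) ∧
    (∃ (R : Matrix (Fin m) (Fin κ) ℝ) (L : Matrix (Fin n) (Fin κ) ℝ),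
        X = R * Lᵀ ∧ l20 R = X.rank ∧ l20 L = X.rank) := by
  classical
  constructor
  · intro R L hX
    have hR : X.rank ≤ l20 R := by
      calc X.rank = (R * Lᵀ).rank := by rw [hX]
        _ ≤ R.rank := rank_mul_le_left R Lᵀ
        _ ≤ l20 R := rank_le_l20_aux R
    have hL : X.rank ≤ l20 L := by
      calc X.rank = (R * Lᵀ).rank := by rw [hX]
        _ ≤ Lᵀ.rank := rank_mul_le_right R Lᵀ
        _ = L.rank := rank_transpose L
        _ ≤ l20 L := rank_le_l20_aux L
    have h1 : (X.rank : ℝ) ≤ (l20 R : ℝ) := by exact_mod_cast hR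
    have h2 : (X.rank : ℝ) ≤ (l20 L : ℝ) := by exact_mod_cast hL
    linarith
  · set r := X.rank with hr
    set V : Submodule ℝ (Fin m → ℝ) := span ℝ (Set.range Xᵀ) with hVdef
    have hV : finrank ℝ V = r := (rank_eq_finrank_span_cols X).symm
    have b : Basis (Fin r) ℝ V := finBasisOfFinrankEq ℝ V hV
    have hmem : ∀ j, Xᵀ j ∈ V := fun j => subset_span ⟨j, rfl⟩
    set c : Fin n → (Fin r →₀ ℝ) := fun j => b.repr ⟨Xᵀ j, hmem j⟩ with hc
    have hXrepr : ∀ j i, X i j = ∑ k, ((b k : Fin m → ℝ) i) * c j k := by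
      intro j i
      have h0 : (∑ k, c j k • b k : V) = ⟨Xᵀ j, hmem j⟩ := b.sum_repr _
      have h1 : ((∑ k, c j k • b k : V) : Fin m → ℝ) = Xᵀ j := by rw [h0]
      rw [AddSubmonoidClass.coe_finset_sum] at h1
      have h2 := congrFun h1 i
      rw [Finset.sum_apply] at h2
      simp only [Submodule.coe_smul, Pi.smul_apply, smul_eq_mul] at h2
      rw [show X i j = Xᵀ j i from rfl, ← h2]
      exact Finset.sum_congr rfl (fun k _ => mul_comm _ _)
    set B : Matrix (Fin m) (Fin r) ℝ := fun i k => (b k : Fin m → ℝ) i with hB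
    set C : Matrix (Fin r) (Fin n) ℝ := fun k j => c j k with hC
    have hBC : X = B * C := by
      ext i j
      rw [Matrix.mul_apply]
      exact hXrepr j i
    -- rank of C is full
    have hrankC : r ≤ C.rank := by
      calc r = X.rank := rfl
        _ = (B * C).rank := by rw [hBC]
        _ ≤ C.rank := rank_mul_le_right B C
    -- rows of C are nonzero
    have hrowC : ∀ k : Fin r, (fun j => C k j) ≠ 0 := by
      intro k hk
      have hsub : {k' : Fin r | (fun j => Cᵀ j k') ≠ 0} ⊆ {k}ᶜ := by
        intro k' hk'
        simp only [Set.mem_compl_iff, Set.mem_singleton_iff]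
        rintro rfl
        exact hk' (funext fun j => congrFun hk j)
      have h1 : C.rank ≤ l20 Cᵀ := by
        calc C.rank = Cᵀ.rank := (rank_transpose C).symm
          _ ≤ l20 Cᵀ := rank_le_l20_aux Cᵀ
      have h2 : l20 Cᵀ ≤ Set.ncard ({k}ᶜ : Set (Fin r)) :=
        Set.ncard_le_ncard hsub (Set.toFinite _)
      have h3 : Set.ncard ({k}ᶜ : Set (Fin r)) = r - 1 := by
        rw [Set.ncard_eq_toFinset_card']
        simp [Finset.card_compl]
      have h4 : 0 < r := k.pos
      omega
    -- columns of B are nonzero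
    have hcolB : ∀ k : Fin r, (fun i => B i k) ≠ 0 := by
      intro k hk
      have : (b k : Fin m → ℝ) = 0 := funext fun i => congrFun hk i
      exact b.ne_zero k (ZeroMemClass.coe_eq_zero.mp this)
    have hrκ : r ≤ κ := hrank
    refine ⟨fun i j => if h : (j : ℕ) < r then B i ⟨j, h⟩ else 0,
      fun j' j => if h : (j : ℕ) < r then C ⟨j, h⟩ j' else 0, ?_, ?_, ?_⟩
    · ext i j'
      erw [Matrix.mul_apply, hBC, Matrix.mul_apply]
      symm
      change ∑ j : Fin κ, (if h : (j : ℕ) < r then B i ⟨j, h⟩ else 0) *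
        (if h : (j : ℕ) < r then C ⟨j, h⟩ j' else 0) = _
      set F : ℕ → ℝ := fun t => if h : t < r then B i ⟨t, h⟩ * C ⟨t, h⟩ j' else 0 with hF
      trans ∑ jκ : Fin κ, F (jκ : ℕ)
      · refine Finset.sum_congr rfl fun jκ _ => ?_
        by_cases h : (jκ : ℕ) < r <;> simp [hF, h]
      · rw [Fin.sum_univ_eq_sum_range, ← Finset.sum_subset (Finset.range_subset_range.2 hrκ)
          (fun x _ hx => dif_neg (by simpa using hx)), ← Fin.sum_univ_eq_sum_range]
        exact Finset.sum_congr rfl fun k _ => dif_pos k.isLt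
    · refine l20_eq_of _ hrκ ?_ ?_
      · intro j hj hcontra
        refine hcolB ⟨j, hj⟩ (funext fun i => ?_)
        have := congrFun hcontra i
        rw [dif_pos hj] at this
        exact this
      · intro j hj
        exact funext fun i => dif_neg hj
    · refine l20_eq_of _ hrκ ?_ ?_
      · intro j hj hcontra
        refine hrowC ⟨j, hj⟩ (funext fun j' => ?_)
        have := congrFun hcontra j'
        rw [dif_pos hj] at this
        exact this
      · intro j hj
        exact funext fun j' => dif_neg hj


end Paper
end
end

section
/- Let X ∈ ℝ^{m×n} have rank s and let κ be a positive integer with s ≤ κ. Then there exist R ∈ ℝ^{m×κ} and L ∈ ℝ^{n×κ} such that X = RLᵀ, RᵀR = LᵀL, and ‖R‖_{2,0} = ‖L‖_{2,0} = s. (Such a pair is obtained from a singular value decomposition X = P Diag(σ(X)) Qᵀ by taking the columns √σ_j(X)·P_j of R and √σ_j(X)·Q_j of L for j = 1,…,κ, where σ_j(X) is the j-th largest singular value of X.) -/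
open scoped BigOperators

noncomputable section

namespace Paper

open Matrix

/-- Positivity of the real dot product of a nonzero vector with itself. -/
lemma aux_dp_self_pos {p : ℕ} {y : Fin p → ℝ} (hy : y ≠ 0) : 0 < y ⬝ᵥ y := by
  obtain ⟨i, hi⟩ := Function.ne_iff.mp hy
  refine Finset.sum_pos' (fun j _ => mul_self_nonneg _) ⟨i, Finset.mem_univ i, ?_⟩
  exact mul_self_pos.mpr (by simpa using hi)

lemma aux_posDef_transpose_mul_self {p t : ℕ} (A : Matrix (Fin p) (Fin t) ℝ)
    (h : Function.Injective A.mulVecLin) : (Aᵀ * A).PosDef := by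
  refine Matrix.posDef_iff_dotProduct_mulVec.mpr ⟨?_, ?_⟩
  · have h1 := Matrix.isHermitian_conjTranspose_mul_self A
    simpa [Matrix.IsHermitian] using h1
  · intro x hx
    have hAx : A *ᵥ x ≠ 0 := by
      intro h0
      exact hx (h (by simpa [Matrix.mulVecLin_apply] using h0))
    have : star x ⬝ᵥ (Aᵀ * A) *ᵥ x = (A *ᵥ x) ⬝ᵥ (A *ᵥ x) := by
      rw [star_trivial, ← Matrix.mulVec_mulVec, Matrix.dotProduct_mulVec, Matrix.vecMul_transpose]
    rw [this]
    exact aux_dp_self_pos hAx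

lemma aux_inj_of_rank {p t : ℕ} (A : Matrix (Fin p) (Fin t) ℝ) (h : A.rank = t) :
    Function.Injective A.mulVecLin := by
  rw [← LinearMap.ker_eq_bot]
  have h1 := LinearMap.finrank_range_add_finrank_ker A.mulVecLin
  rw [Matrix.rank] at h
  rw [show Module.finrank ℝ (Fin t → ℝ) = t by simp, h] at h1
  exact Submodule.finrank_eq_zero.mp (by omega)

lemma aux_rank_factorization {m n s : ℕ} (X : Matrix (Fin m) (Fin n) ℝ) (hs : X.rank = s) :
    ∃ (B : Matrix (Fin m) (Fin s) ℝ) (C : Matrix (Fin n) (Fin s) ℝ),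
      X = B * Cᵀ ∧ B.rank = s ∧ C.rank = s := by
  set V := LinearMap.range X.mulVecLin with hV
  have hfr : Module.finrank ℝ V = s := hs
  let b : Module.Basis (Fin s) ℝ V := Module.finBasisOfFinrankEq ℝ V hfr
  have hmem : ∀ j : Fin n, (fun i => X i j) ∈ V := by
    intro j
    exact ⟨Pi.single j 1, by ext i; simp [Matrix.mulVecLin_apply, Matrix.mulVec_single]⟩
  let B : Matrix (Fin m) (Fin s) ℝ := fun i k => (b k : Fin m → ℝ) i
  let C : Matrix (Fin n) (Fin s) ℝ := fun j k => b.repr ⟨fun i => X i j, hmem j⟩ k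
  have hX : X = B * Cᵀ := by
    ext i j
    have hr := b.sum_repr ⟨fun i => X i j, hmem j⟩
    have := congrArg (fun v : V => (v : Fin m → ℝ) i) hr
    simp only [AddSubmonoidClass.coe_finset_sum, SetLike.val_smul, Finset.sum_apply,
      Pi.smul_apply, smul_eq_mul] at this
    rw [Matrix.mul_apply]
    simp only [Matrix.transpose_apply]
    rw [← this]
    exact Finset.sum_congr rfl fun k _ => by ring
  refine ⟨B, C, hX, ?_, ?_⟩
  · refine le_antisymm (Matrix.rank_le_width B) ?_
    calc s = X.rank := hs.symm
    _ = (B * Cᵀ).rank := by rw [hX]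
    _ ≤ B.rank := Matrix.rank_mul_le_left B Cᵀ
  · refine le_antisymm (Matrix.rank_le_width C) ?_
    calc s = X.rank := hs.symm
    _ = (B * Cᵀ).rank := by rw [hX]
    _ ≤ Cᵀ.rank := Matrix.rank_mul_le_right B Cᵀ
    _ = C.rank := by rw [Matrix.rank_transpose]

/-- Over `ℝ`, the conjugate transpose is the transpose. -/
lemma aux_ctr {a b : ℕ} (A : Matrix (Fin a) (Fin b) ℝ) : Aᴴ = Aᵀ := by
  ext i j; simp [Matrix.conjTranspose_apply]

open scoped MatrixOrder in
lemma aux_balance {s : ℕ} (G H : Matrix (Fin s) (Fin s) ℝ) (hG : G.PosDef) (hH : H.PosDef) :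
    ∃ (M N : Matrix (Fin s) (Fin s) ℝ) (d : Fin s → ℝ),
      M * N = 1 ∧ (∀ i, 0 < d i) ∧ Mᵀ * G * M = Matrix.diagonal d ∧
      N * H * Nᵀ = Matrix.diagonal d := by
  classical
  set S := CFC.sqrt G with hSdef
  have hS2 : S * S = G := CFC.sqrt_mul_sqrt_self G hG.posSemidef.nonneg
  have hSh : Sᵀ = S := by
    have := (CFC.sqrt_nonneg G : 0 ≤ S).posSemidef.isHermitian
    rwa [Matrix.IsHermitian, aux_ctr] at this
  have hdS : IsUnit S.det := by
    have : S.det * S.det = G.det := by rw [← Matrix.det_mul, hS2]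
    have hGd := hG.det_pos
    refine isUnit_iff_ne_zero.mpr fun h0 => ?_
    rw [h0, mul_zero] at this; exact hGd.ne (this.symm ▸ rfl) |>.elim
  set Si := S⁻¹ with hSidef
  have hSSi : S * Si = 1 := Matrix.mul_nonsing_inv S hdS
  have hSiS : Si * S = 1 := Matrix.nonsing_inv_mul S hdS
  have hSih : Siᵀ = Si := by
    rw [hSidef]
    rw [Matrix.transpose_nonsing_inv, hSh]
  have hA : (S * H * S).PosDef := by
    refine Matrix.posDef_iff_dotProduct_mulVec.mpr ⟨?_, ?_⟩
    · rw [Matrix.IsHermitian, aux_ctr, Matrix.transpose_mul, Matrix.transpose_mul, hSh,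
        show Hᵀ = H from by rw [← aux_ctr, hH.isHermitian.eq], mul_assoc]
    · intro x hx
      have hSx : S *ᵥ x ≠ 0 := by
        intro h0
        apply hx
        have := congrArg (fun y => Si *ᵥ y) h0
        simpa [Matrix.mulVec_mulVec, hSiS] using this
      have : star x ⬝ᵥ (S * H * S) *ᵥ x = star (S *ᵥ x) ⬝ᵥ H *ᵥ (S *ᵥ x) := by
        rw [star_trivial, star_trivial, ← Matrix.mulVec_mulVec, ← Matrix.mulVec_mulVec,
          Matrix.dotProduct_mulVec x,
          show x ᵥ* S = S *ᵥ x from by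
            have h := Matrix.vecMul_transpose S x; rwa [hSh] at h]
      rw [this]
      exact hH.dotProduct_mulVec_pos hSx
  set ev := hA.isHermitian.eigenvalues with hev
  set U : Matrix (Fin s) (Fin s) ℝ :=
    (Matrix.IsHermitian.eigenvectorUnitary hA.isHermitian : Matrix (Fin s) (Fin s) ℝ) with hU
  have hUtU : Uᵀ * U = 1 := by
    have := (Matrix.mem_unitaryGroup_iff').mp
      (Matrix.IsHermitian.eigenvectorUnitary hA.isHermitian).2
    rwa [show star U = Uᵀ from by rw [← aux_ctr]; rfl] at this
  have hUUt : U * Uᵀ = 1 := by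
    have := (Matrix.mem_unitaryGroup_iff).mp
      (Matrix.IsHermitian.eigenvectorUnitary hA.isHermitian).2
    rwa [show star U = Uᵀ from by rw [← aux_ctr]; rfl] at this
  have hspec : S * H * S = U * Matrix.diagonal ev * Uᵀ := by
    have := hA.isHermitian.spectral_theorem
    rwa [Unitary.conjStarAlgAut_apply, show star U = Uᵀ from by rw [← aux_ctr]; rfl,
      show RCLike.ofReal ∘ ev = ev from by ext i; simp] at this
  have hevpos : ∀ i, 0 < ev i := hA.eigenvalues_pos
  set f : Fin s → ℝ := fun i => Real.sqrt (Real.sqrt (ev i)) with hf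
  have hfpos : ∀ i, 0 < f i := fun i => Real.sqrt_pos.mpr (Real.sqrt_pos.mpr (hevpos i))
  set F := Matrix.diagonal f with hF
  set Fi := Matrix.diagonal (fun i => (f i)⁻¹) with hFi
  have hFFi : F * Fi = 1 := by
    rw [hF, hFi, Matrix.diagonal_mul_diagonal,
      show (fun i => f i * (f i)⁻¹) = fun _ => (1:ℝ) from
        funext fun i => mul_inv_cancel₀ (hfpos i).ne']
    exact Matrix.diagonal_one
  have hFt : Fᵀ = F := Matrix.diagonal_transpose f
  have hFit : Fiᵀ = Fi := Matrix.diagonal_transpose _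
  have hSiGSi : Si * G * Si = 1 := by
    rw [← hS2]
    calc Si * (S * S) * Si = (Si * S) * (S * Si) := by simp only [mul_assoc]
    _ = 1 := by rw [hSiS, hSSi, one_mul]
  have key : Uᵀ * (S * H * S) * U = Matrix.diagonal ev := by
    rw [hspec]
    calc Uᵀ * (U * Matrix.diagonal ev * Uᵀ) * U
        = (Uᵀ * U) * (Matrix.diagonal ev * (Uᵀ * U)) := by
          simp only [mul_assoc]
    _ = Matrix.diagonal ev := by rw [hUtU, one_mul, mul_one]
  refine ⟨Si * U * F, Fi * Uᵀ * S, fun i => Real.sqrt (ev i), ?_,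
    fun i => Real.sqrt_pos.mpr (hevpos i), ?_, ?_⟩
  · calc Si * U * F * (Fi * Uᵀ * S) = Si * (U * ((F * Fi) * (Uᵀ * S))) := by
          simp only [mul_assoc]
    _ = Si * ((U * Uᵀ) * S) := by rw [hFFi, one_mul]; simp only [mul_assoc]
    _ = 1 := by rw [hUUt, one_mul, hSiS]
  · have hMt : (Si * U * F)ᵀ = F * Uᵀ * Si := by
      rw [Matrix.transpose_mul, Matrix.transpose_mul, hFt, hSih, mul_assoc]
    rw [hMt]
    calc F * Uᵀ * Si * G * (Si * U * F) = F * (Uᵀ * ((Si * G * Si) * (U * F))) := by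
          simp only [mul_assoc]
    _ = F * ((Uᵀ * U) * F) := by rw [hSiGSi, one_mul]; simp only [mul_assoc]
    _ = F * F := by rw [hUtU, one_mul]
    _ = Matrix.diagonal fun i => Real.sqrt (ev i) := by
          rw [hF, Matrix.diagonal_mul_diagonal]
          exact congrArg Matrix.diagonal
            (funext fun i => Real.mul_self_sqrt (Real.sqrt_nonneg _))
  · have hNt : (Fi * Uᵀ * S)ᵀ = S * (U * Fi) := by
      rw [Matrix.transpose_mul, Matrix.transpose_mul, hFit, hSh, Matrix.transpose_transpose]
    rw [hNt]
    calc Fi * Uᵀ * S * H * (S * (U * Fi)) = Fi * ((Uᵀ * (S * H * S) * U) * Fi) := by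
          simp only [mul_assoc]
    _ = Fi * (Matrix.diagonal ev * Fi) := by rw [key]
    _ = Matrix.diagonal fun i => Real.sqrt (ev i) := by
          rw [hFi, Matrix.diagonal_mul_diagonal, Matrix.diagonal_mul_diagonal]
          refine congrArg Matrix.diagonal (funext fun i => ?_)
          have h2 : f i * f i = Real.sqrt (ev i) := Real.mul_self_sqrt (Real.sqrt_nonneg _)
          have h3 : (f i)⁻¹ * (ev i * (f i)⁻¹) = ev i / (f i * f i) := by ring
          rw [h3, h2, div_eq_iff (Real.sqrt_pos.mpr (hevpos i)).ne']
          exact (Real.mul_self_sqrt (hevpos i).le).symm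

/-- The `s × κ` selection matrix. -/
def Jmat (s κ : ℕ) : Matrix (Fin s) (Fin κ) ℝ := fun a b => if (b:ℕ) = (a:ℕ) then 1 else 0

lemma Jmat_mul_transpose (s κ : ℕ) (h : s ≤ κ) : Jmat s κ * (Jmat s κ)ᵀ = 1 := by
  ext a a'
  rw [Matrix.mul_apply]
  simp only [Jmat, Matrix.transpose_apply]
  rcases eq_or_ne a a' with rfl | hne
  · rw [Finset.sum_eq_single (Fin.castLE h a)]
    · simp [Matrix.one_apply]
    · intro b _ hb
      have : (b:ℕ) ≠ (a:ℕ) := fun hc => hb (Fin.ext (by simp [hc]))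
      simp [this]
    · simp
  · rw [Finset.sum_eq_zero, Matrix.one_apply_ne hne]
    intro b _
    rcases eq_or_ne (b:ℕ) (a:ℕ) with hb | hb
    · have : (b:ℕ) ≠ (a':ℕ) := by
        intro hc; exact hne (Fin.ext (hb.symm.trans hc))
      simp [this]
    · simp [hb]

lemma JdJ_diag (s κ : ℕ) (d : Fin s → ℝ) (j : Fin κ) :
    ((Jmat s κ)ᵀ * Matrix.diagonal d * (Jmat s κ)) j j =
      if h : (j:ℕ) < s then d ⟨j, h⟩ else 0 := by
  rw [Matrix.mul_apply]
  simp only [Matrix.mul_diagonal, Matrix.transpose_apply]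
  split
  · next h =>
    rw [Finset.sum_eq_single ⟨(j:ℕ), h⟩]
    · simp [Jmat]
    · intro a _ ha
      have : (j:ℕ) ≠ (a:ℕ) := fun hc => ha (Fin.ext (by simp [hc.symm]))
      simp [Jmat, this]
    · simp
  · next h =>
    refine Finset.sum_eq_zero fun a _ => ?_
    have : (j:ℕ) ≠ (a:ℕ) := fun hc => h (hc ▸ a.2)
    simp [Jmat, this]

lemma col_ne_zero_iff {p κ : ℕ} (W : Matrix (Fin p) (Fin κ) ℝ) (j : Fin κ) :
    (fun i => W i j) ≠ 0 ↔ (Wᵀ * W) j j ≠ 0 := by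
  rw [Matrix.mul_apply]
  simp only [Matrix.transpose_apply]
  rw [not_iff_not]
  constructor
  · intro h
    refine Finset.sum_eq_zero fun i _ => ?_
    have : W i j = 0 := congrFun h i
    rw [this, mul_zero]
  · intro h
    funext i
    have h0 := (Finset.sum_eq_zero_iff_of_nonneg
      (fun i _ => mul_self_nonneg (W i j))).mp h i (Finset.mem_univ i)
    exact mul_self_eq_zero.mp h0

lemma ncard_val_lt {κ s : ℕ} (h : s ≤ κ) : {j : Fin κ | (j:ℕ) < s}.ncard = s := by
  rw [← Nat.card_coe_set_eq]
  have e : {j : Fin κ | (j:ℕ) < s} ≃ Fin s :=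
    { toFun := fun j => ⟨(j.1 : ℕ), j.2⟩
      invFun := fun a => ⟨Fin.castLE h a, a.2⟩
      left_inv := fun j => by ext; simp
      right_inv := fun a => by ext; simp }
  rw [Nat.card_congr e, Nat.card_eq_fintype_card, Fintype.card_fin]


/-- existence of a balanced factorization with `s` nonzero columns. -/
theorem exists_balanced_l20_factorization
    {m n : ℕ} (X : Matrix (Fin m) (Fin n) ℝ) (s κ : ℕ)
    (hs : X.rank = s) (hκ : 1 ≤ κ) (hsκ : s ≤ κ) :
    ∃ (R : Matrix (Fin m) (Fin κ) ℝ) (L : Matrix (Fin n) (Fin κ) ℝ),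
      X = R * Lᵀ ∧ Rᵀ * R = Lᵀ * L ∧ l20 R = s ∧ l20 L = s := by
  classical
  obtain ⟨B, C, hX, hBr, hCr⟩ := aux_rank_factorization X hs
  have hGB : (Bᵀ * B).PosDef := aux_posDef_transpose_mul_self B (aux_inj_of_rank B hBr)
  have hHC : (Cᵀ * C).PosDef := aux_posDef_transpose_mul_self C (aux_inj_of_rank C hCr)
  obtain ⟨M, N, d, hMN, hdpos, hMGM, hNHN⟩ := aux_balance _ _ hGB hHC
  set J := Jmat s κ with hJ
  have hJJt : J * Jᵀ = 1 := Jmat_mul_transpose s κ hsκ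
  have hR : (B * M * J)ᵀ * (B * M * J) = Jᵀ * Matrix.diagonal d * J := by
    rw [Matrix.transpose_mul, Matrix.transpose_mul]
    calc Jᵀ * (Mᵀ * Bᵀ) * (B * M * J) = Jᵀ * ((Mᵀ * (Bᵀ * B) * M) * J) := by
          simp only [Matrix.mul_assoc]
    _ = Jᵀ * (Matrix.diagonal d * J) := by rw [hMGM]
    _ = Jᵀ * Matrix.diagonal d * J := by rw [Matrix.mul_assoc]
  have hL : (C * Nᵀ * J)ᵀ * (C * Nᵀ * J) = Jᵀ * Matrix.diagonal d * J := by
    rw [Matrix.transpose_mul, Matrix.transpose_mul, Matrix.transpose_transpose]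
    calc Jᵀ * (N * Cᵀ) * (C * Nᵀ * J) = Jᵀ * ((N * (Cᵀ * C) * Nᵀ) * J) := by
          simp only [Matrix.mul_assoc]
    _ = Jᵀ * (Matrix.diagonal d * J) := by rw [hNHN]
    _ = Jᵀ * Matrix.diagonal d * J := by rw [Matrix.mul_assoc]
  have hcols : ∀ (p : ℕ) (W : Matrix (Fin p) (Fin κ) ℝ),
      Wᵀ * W = Jᵀ * Matrix.diagonal d * J → l20 W = s := by
    intro p W hW
    have hset : {j : Fin κ | (fun i => W i j) ≠ 0} = {j : Fin κ | (j:ℕ) < s} := by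
      ext j
      simp only [Set.mem_setOf_eq]
      rw [col_ne_zero_iff, hW, JdJ_diag]
      by_cases h : (j:ℕ) < s
      · simp [h, (hdpos ⟨j, h⟩).ne']
      · simp [h]
    rw [l20, hset, ncard_val_lt hsκ]
  refine ⟨B * M * J, C * Nᵀ * J, ?_, ?_, hcols m _ hR, hcols n _ hL⟩
  · rw [Matrix.transpose_mul, Matrix.transpose_mul, Matrix.transpose_transpose]
    calc X = B * Cᵀ := hX
    _ = B * ((M * N) * Cᵀ) := by rw [hMN, Matrix.one_mul]
    _ = B * (M * ((J * Jᵀ) * (N * Cᵀ))) := by rw [hJJt, Matrix.one_mul]; simp only [Matrix.mul_assoc]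
    _ = B * M * J * (Jᵀ * (N * Cᵀ)) := by simp only [Matrix.mul_assoc]
  · rw [hR, hL]


end Paper
end
end

section
/- Let φ ∈ 𝓛 and let z ∈ ℝ^κ. Then ‖z‖_0 = min{ Σ_{i=1}^κ φ(w_i) : w ∈ ℝ^κ, 0 ≤ w ≤ e, ⟨e − w, |z|⟩ = 0 }, where ‖z‖_0 is the number of nonzero entries of z, |z| is the componentwise absolute value, e is the all-ones vector, and the inequalities 0 ≤ w ≤ e are componentwise; moreover the minimum is attained. -/
open scoped BigOperators

noncomputable section

namespace Paper

open Matrix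

section Aux

variable {κ : ℕ} (L : LFamily) (z : Fin κ → ℝ)

lemma sum_one_coe_card {κ : ℕ} (S : Finset (Fin κ)) :
    ∑ _i ∈ S, (1 : EReal) = ((S.card : ℝ) : EReal) := by
  induction S using Finset.induction with
  | empty => simp
  | insert _ _ hx ih =>
      rw [Finset.sum_insert hx, ih, Finset.card_insert_of_notMem hx]
      push_cast
      rw [add_comm]

/-- The canonical feasible point attains the value `zeroNorm z`. -/
lemma witness_attains :
    ∃ w : Fin κ → ℝ, (∀ i, 0 ≤ w i ∧ w i ≤ 1) ∧
        (∑ i, (1 - w i) * |z i|) = 0 ∧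
        (∑ i, L.phi (w i)) = ((zeroNorm z : ℝ) : EReal) := by
  refine ⟨fun i => if z i ≠ 0 then 1 else L.tstar, ?_, ?_, ?_⟩
  · intro i
    by_cases h : z i ≠ 0 <;> simp [h, L.tstar_mem.1, L.tstar_mem.2]
  · apply Finset.sum_eq_zero
    intro i _
    by_cases h : z i ≠ 0
    · simp [h]
    · simp at h; simp [h]
  · have hcard : zeroNorm z = (Finset.univ.filter (fun i => z i ≠ 0)).card := by
      rw [zeroNorm, Set.ncard_eq_toFinset_card']
      congr 1
      ext i
      simp
    have : (∑ i, L.phi (if z i ≠ 0 then 1 else L.tstar))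
        = ∑ i : Fin κ, (if z i ≠ 0 then (1 : EReal) else 0) := by
      apply Finset.sum_congr rfl
      intro i _
      by_cases h : z i ≠ 0 <;> simp [h, L.phi_one, L.phi_tstar]
    rw [this, ← Finset.sum_filter, sum_one_coe_card, hcard]

lemma lower_bound {y : EReal} {w : Fin κ → ℝ} (hw : ∀ i, 0 ≤ w i ∧ w i ≤ 1)
    (hc : (∑ i, (1 - w i) * |z i|) = 0) (hy : y = ∑ i, L.phi (w i)) :
    ((zeroNorm z : ℝ) : EReal) ≤ y := by
  have hterm : ∀ i ∈ Finset.univ, (0:ℝ) ≤ (1 - w i) * |z i| := fun i _ =>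
    mul_nonneg (by linarith [(hw i).2]) (abs_nonneg _)
  have hzero := (Finset.sum_eq_zero_iff_of_nonneg hterm).1 hc
  have hone : ∀ i, z i ≠ 0 → w i = 1 := by
    intro i hi
    have := hzero i (Finset.mem_univ i)
    have habs : 0 < |z i| := abs_pos.2 hi
    have : 1 - w i = 0 := by
      rcases mul_eq_zero.1 this with h | h
      · exact h
      · exact absurd h (ne_of_gt habs)
    linarith
  have hcard : zeroNorm z = (Finset.univ.filter (fun i => z i ≠ 0)).card := by
    rw [zeroNorm, Set.ncard_eq_toFinset_card']
    congr 1
    ext i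
    simp
  set S := Finset.univ.filter (fun i : Fin κ => z i ≠ 0) with hS
  have h1 : ((zeroNorm z : ℝ) : EReal) = ∑ i ∈ S, L.phi (w i) := by
    have : ∀ i ∈ S, L.phi (w i) = 1 := by
      intro i hi
      simp only [hS, Finset.mem_filter] at hi
      rw [hone i hi.2, L.phi_one]
    rw [Finset.sum_congr rfl this, hcard, sum_one_coe_card]
  rw [h1, hy]
  apply Finset.sum_le_sum_of_subset_of_nonneg (Finset.subset_univ S)
  intro i _ _
  exact L.phi_nonneg (w i) ⟨(hw i).1, (hw i).2⟩

end Aux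

/-- variational characterization of the `ℓ_0` norm via `φ ∈ 𝓛`. -/
theorem zeroNorm_eq_min_phi
    {κ : ℕ} (L : LFamily) (z : Fin κ → ℝ) :
    sInf {y : EReal | ∃ w : Fin κ → ℝ, (∀ i, 0 ≤ w i ∧ w i ≤ 1) ∧
        (∑ i, (1 - w i) * |z i|) = 0 ∧ y = ∑ i, L.phi (w i)} =
      ((zeroNorm z : ℝ) : EReal) ∧
    (∃ w : Fin κ → ℝ, (∀ i, 0 ≤ w i ∧ w i ≤ 1) ∧
        (∑ i, (1 - w i) * |z i|) = 0 ∧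
        (∑ i, L.phi (w i)) = ((zeroNorm z : ℝ) : EReal)) := by
  obtain ⟨w, hw, hc, hv⟩ := witness_attains L z
  refine ⟨le_antisymm ?_ ?_, w, hw, hc, hv⟩
  · exact sInf_le ⟨w, hw, hc, hv.symm⟩
  · apply le_sInf
    rintro y ⟨w', hw', hc', hy'⟩
    exact lower_bound L z hw' hc' hy'

end Paper
end
end

section
/- Let φ ∈ 𝓛 and let Z ∈ ℝ^{m×n}. With G(Z) = (‖Z_1‖, ‖Z_2‖, …, ‖Z_n‖)ᵀ ∈ ℝ^n the vector of Euclidean norms of the columns of Z, one has ‖Z‖_{2,0} = min{ Σ_{i=1}^n φ(w_i) : w ∈ ℝ^n, 0 ≤ w ≤ e, ⟨e − w, G(Z)⟩ = 0 }, where e is the all-ones vector and the inequalities are componentwise; moreover the minimum is attained. -/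
open scoped BigOperators

noncomputable section

namespace Paper

open Matrix

/-- variational characterization of the `ℓ_{2,0}` norm via `φ ∈ 𝓛`. -/
theorem l20_eq_min_phi
    {m n : ℕ} (L : LFamily) (Z : Matrix (Fin m) (Fin n) ℝ) :
    sInf {y : EReal | ∃ w : Fin n → ℝ, (∀ i, 0 ≤ w i ∧ w i ≤ 1) ∧
        (∑ i, (1 - w i) * colNorm Z i) = 0 ∧ y = ∑ i, L.phi (w i)} =
      ((l20 Z : ℝ) : EReal) ∧
    (∃ w : Fin n → ℝ, (∀ i, 0 ≤ w i ∧ w i ≤ 1) ∧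
        (∑ i, (1 - w i) * colNorm Z i) = 0 ∧
        (∑ i, L.phi (w i)) = ((l20 Z : ℝ) : EReal)) := by
  classical
  set P : Fin n → Prop := fun j => (fun i => Z i j) ≠ 0 with hP
  have hcoe : ∀ (f : Fin n → ℝ), ((∑ i, f i : ℝ) : EReal) = ∑ i, ((f i : ℝ) : EReal) := by
    intro f
    exact map_sum (⟨⟨Real.toEReal, rfl⟩, fun x y => EReal.coe_add x y⟩ : ℝ →+ EReal) f Finset.univ
  have hl20 : l20 Z = (Finset.univ.filter P).card := by
    rw [l20, Set.ncard_eq_toFinset_card']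
    simp [P]
  have hcol_nonneg : ∀ j, 0 ≤ colNorm Z j := fun j => Real.sqrt_nonneg _
  have hcol_zero : ∀ j, colNorm Z j = 0 ↔ ¬ P j := by
    intro j
    constructor
    · intro h hp
      apply hp
      funext i
      have hs : (∑ i, (Z i j) ^ 2) = 0 := by
        have h1 := (Real.sqrt_eq_zero' ).mp h
        have h2 : (0:ℝ) ≤ ∑ i, (Z i j) ^ 2 :=
          Finset.sum_nonneg (fun i _ => sq_nonneg (Z i j))
        linarith
      have := (Finset.sum_eq_zero_iff_of_nonneg
        (fun i _ => sq_nonneg (Z i j))).mp hs i (Finset.mem_univ i)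
      exact sq_eq_zero_iff.mp this
    · intro h
      have hz : (fun i => Z i j) = 0 := not_not.mp h
      have : ∀ i, Z i j = 0 := fun i => congrFun hz i
      simp [colNorm, this]
  -- the candidate minimizer
  set w₀ : Fin n → ℝ := fun j => if P j then (1:ℝ) else L.tstar with hw₀
  have hbd : ∀ i, 0 ≤ w₀ i ∧ w₀ i ≤ 1 := by
    intro i
    by_cases h : P i
    · simp only [hw₀]; rw [if_pos h]; norm_num
    · simp only [hw₀]; rw [if_neg h]; exact ⟨L.tstar_mem.1, L.tstar_mem.2⟩
  have hfeas : (∑ i, (1 - w₀ i) * colNorm Z i) = 0 := by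
    apply Finset.sum_eq_zero
    intro i _
    by_cases h : P i
    · simp only [hw₀]; rw [if_pos h]; ring
    · rw [(hcol_zero i).mpr h]; ring
  have hval : (∑ i, L.phi (w₀ i)) = ((l20 Z : ℝ) : EReal) := by
    have h1 : (∑ i, L.phi (w₀ i)) = ∑ i, (((if P i then (1:ℝ) else 0) : ℝ) : EReal) := by
      apply Finset.sum_congr rfl
      intro i _
      by_cases h : P i
      · simp only [hw₀]; rw [if_pos h, if_pos h, L.phi_one]; norm_num
      · simp only [hw₀]; rw [if_neg h, if_neg h, L.phi_tstar]; norm_num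
    rw [h1, ← hcoe]
    congr 1
    rw [Finset.sum_boole, hl20]
  -- lower bound for any feasible point
  have hlb : ∀ y ∈ {y : EReal | ∃ w : Fin n → ℝ, (∀ i, 0 ≤ w i ∧ w i ≤ 1) ∧
      (∑ i, (1 - w i) * colNorm Z i) = 0 ∧ y = ∑ i, L.phi (w i)},
      ((l20 Z : ℝ) : EReal) ≤ y := by
    rintro y ⟨w, hw, hsum, rfl⟩
    have hterm : ∀ i ∈ Finset.univ, (0:ℝ) ≤ (1 - w i) * colNorm Z i := by
      intro i _
      exact mul_nonneg (by linarith [(hw i).2]) (hcol_nonneg i)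
    have hzero := (Finset.sum_eq_zero_iff_of_nonneg hterm).mp hsum
    have hw1 : ∀ i, P i → w i = 1 := by
      intro i hi
      have h0 := hzero i (Finset.mem_univ i)
      have hc : colNorm Z i ≠ 0 := fun h => ((hcol_zero i).mp h) hi
      have : (1 - w i) = 0 := by
        rcases mul_eq_zero.mp h0 with h | h
        · exact h
        · exact absurd h hc
      linarith
    calc ((l20 Z : ℝ) : EReal) = ∑ i, (((if P i then (1:ℝ) else 0) : ℝ) : EReal) := by
            rw [← hcoe]; congr 1; rw [Finset.sum_boole, hl20]
      _ ≤ ∑ i, L.phi (w i) := by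
            apply Finset.sum_le_sum
            intro i _
            by_cases h : P i
            · rw [if_pos h, hw1 i h, L.phi_one]; norm_num
            · rw [if_neg h, EReal.coe_zero]
              exact L.phi_nonneg (w i) ⟨(hw i).1, (hw i).2⟩
  constructor
  · apply le_antisymm
    · exact sInf_le ⟨w₀, hbd, hfeas, hval.symm⟩
    · exact le_sInf hlb
  · exact ⟨w₀, hbd, hfeas, hval⟩

end Paper
end
end

section
/- Let f : ℝ^{m×n} → ℝ be any function, let ν > 0, let κ be a positive integer, let 𝒳* denote the set of global minimizers of X ↦ ν f(X) + rank(X) over ℝ^{m×n}, and let Ω_κ = {X ∈ ℝ^{m×n} : rank(X) ≤ κ}. Suppose 𝒳* ∩ Ω_κ ≠ ∅. If (Ū, V̄) ∈ ℝ^{m×κ} × ℝ^{n×κ} is a global minimizer of (U,V) ↦ ν f(UVᵀ) + (1/2)(‖U‖_{2,0} + ‖V‖_{2,0}), then ŪV̄ᵀ is a global minimizer of X ↦ ν f(X) + rank(X), i.e. ŪV̄ᵀ ∈ 𝒳*. -/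
open scoped BigOperators

noncomputable section

namespace Paper

open Matrix

/-- rank is at most number of nonzero columns -/
lemma rank_le_l20 {m k : ℕ} (U : Matrix (Fin m) (Fin k) ℝ) : U.rank ≤ l20 U := by
  classical
  set T : Finset (Fin k) := Finset.univ.filter (fun j => (fun i => U i j) ≠ 0) with hT
  have hl20 : l20 U = T.card := by
    rw [l20, hT]
    rw [← Set.ncard_coe_finset]
    congr 1
    ext j
    simp
  rw [hl20]
  have hspan : Submodule.span ℝ (Set.range Uᵀ) ≤
      Submodule.span ℝ (↑(T.image Uᵀ) : Set (Fin m → ℝ)) := by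
    rw [Submodule.span_le]
    rintro x ⟨j, rfl⟩
    by_cases hj : (fun i => U i j) = 0
    · have : Uᵀ j = 0 := by
        ext i; exact congrFun hj i
      rw [this]
      exact Submodule.zero_mem _
    · apply Submodule.subset_span
      simp only [Finset.coe_image, Set.mem_image, Finset.mem_coe]
      exact Finset.mem_coe.mpr (Finset.mem_image.mpr ⟨j, by simp [hT, hj], rfl⟩)
  calc U.rank = Module.finrank ℝ (Submodule.span ℝ (Set.range Uᵀ)) :=
        rank_eq_finrank_span_cols U
    _ ≤ Module.finrank ℝ (Submodule.span ℝ (↑(T.image Uᵀ) : Set (Fin m → ℝ))) :=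
        Submodule.finrank_mono hspan
    _ ≤ (T.image Uᵀ).card := finrank_span_finset_le_card _
    _ ≤ T.card := Finset.card_image_le

/-- rank factorization with padding to κ columns -/
lemma exists_factorization {m n κ : ℕ} (X : Matrix (Fin m) (Fin n) ℝ) (hXκ : X.rank ≤ κ) :
    ∃ (U : Matrix (Fin m) (Fin κ) ℝ) (V : Matrix (Fin n) (Fin κ) ℝ),
      X = U * Vᵀ ∧ l20 U ≤ X.rank ∧ l20 V ≤ X.rank := by
  classical
  set r := X.rank with hr
  set S := Submodule.span ℝ (Set.range Xᵀ) with hS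
  have hfr : Module.finrank ℝ S = r := (rank_eq_finrank_span_cols X).symm
  let b : Module.Basis (Fin r) ℝ S := (Module.finBasis ℝ S).reindex (finCongr hfr)
  have hxmem : ∀ j : Fin n, Xᵀ j ∈ S := fun j => Submodule.subset_span ⟨j, rfl⟩
  let x : Fin n → S := fun j => ⟨Xᵀ j, hxmem j⟩
  let U : Matrix (Fin m) (Fin κ) ℝ := fun i k =>
    if h : (k : ℕ) < r then ((b ⟨k, h⟩ : Fin m → ℝ)) i else 0
  let V : Matrix (Fin n) (Fin κ) ℝ := fun j k =>
    if h : (k : ℕ) < r then b.repr (x j) ⟨k, h⟩ else 0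
  refine ⟨U, V, ?_, ?_, ?_⟩
  · ext i j
    have hsum : (x j : Fin m → ℝ) = ∑ k : Fin r, b.repr (x j) k • (b k : Fin m → ℝ) := by
      conv_lhs => rw [← b.sum_repr (x j)]
      push_cast [Submodule.coe_sum]
      rfl
    have hXij : X i j = ∑ k : Fin r, b.repr (x j) k * (b k : Fin m → ℝ) i := by
      have := congrFun hsum i
      simp [Finset.sum_apply] at this
      exact this
    have hsub : ∑ k : Fin κ, U i k * V j k
        = ∑ k ∈ Finset.univ.map (Fin.castLEEmb hXκ), U i k * V j k := by
      refine (Finset.sum_subset (Finset.subset_univ _) ?_).symm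
      intro k _ hk
      have hkr : ¬ ((k : ℕ) < r) := by
        intro hlt
        apply hk
        simp only [Finset.mem_map, Finset.mem_univ, Fin.castLEEmb_apply]
        exact ⟨⟨k, hlt⟩, trivial, by ext; simp⟩
      simp [U, V, hkr]
    rw [Matrix.mul_apply]
    simp only [Matrix.transpose_apply]
    rw [hsub, Finset.sum_map, hXij]
    apply Finset.sum_congr rfl
    intro k _
    have hk : ((Fin.castLEEmb hXκ k : Fin κ) : ℕ) < r := by simp [k.isLt]
    have hkk : (⟨((Fin.castLE hXκ k : Fin κ) : ℕ), hk⟩ : Fin r) = k := by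
      ext; simp
    simp only [U, V, Fin.castLEEmb_apply, hkk]
    have hk' : ((Fin.castLE hXκ k : Fin κ) : ℕ) < r := k.isLt
    rw [dif_pos hk', dif_pos hk', mul_comm]
  · have hsub : {j : Fin κ | (fun i => U i j) ≠ 0} ⊆ {j : Fin κ | (j : ℕ) < r} := by
      intro k hk
      by_contra hkr
      exact hk (by funext i; show dite _ _ _ = 0; exact dif_neg hkr)
    calc l20 U ≤ Set.ncard {j : Fin κ | (j : ℕ) < r} :=
          Set.ncard_le_ncard hsub (Set.toFinite _)
      _ ≤ r := by
          have : {j : Fin κ | (j : ℕ) < r} = Set.range (Fin.castLE hXκ) := by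
            ext k
            constructor
            · intro hk; exact ⟨⟨k, hk⟩, by ext; simp⟩
            · rintro ⟨k', rfl⟩; exact k'.isLt
          rw [this, ← Nat.card_coe_set_eq,
            Nat.card_range_of_injective (Fin.castLE_injective hXκ),
            Nat.card_eq_fintype_card, Fintype.card_fin]
  · have hsub : {j : Fin κ | (fun i => V i j) ≠ 0} ⊆ {j : Fin κ | (j : ℕ) < r} := by
      intro k hk
      by_contra hkr
      exact hk (by funext i; show dite _ _ _ = 0; exact dif_neg hkr)
    calc l20 V ≤ Set.ncard {j : Fin κ | (j : ℕ) < r} :=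
          Set.ncard_le_ncard hsub (Set.toFinite _)
      _ ≤ r := by
          have : {j : Fin κ | (j : ℕ) < r} = Set.range (Fin.castLE hXκ) := by
            ext k
            constructor
            · intro hk; exact ⟨⟨k, hk⟩, by ext; simp⟩
            · rintro ⟨k', rfl⟩; exact k'.isLt
          rw [this, ← Nat.card_coe_set_eq,
            Nat.card_range_of_injective (Fin.castLE_injective hXκ),
            Nat.card_eq_fintype_card, Fintype.card_fin]


set_option maxHeartbeats 1000000 in
/-- a global minimizer of the `ℓ_{2,0}` regularized factorization yields a
global minimizer of the rank regularized problem (second part of Lemma 3.1). -/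
theorem rank_reg_min_of_factored_global_min
    {m n : ℕ} (f : Matrix (Fin m) (Fin n) ℝ → ℝ) (ν : ℝ) (hν : 0 < ν)
    (κ : ℕ) (hκ : 1 ≤ κ)
    (hne : ∃ X0 : Matrix (Fin m) (Fin n) ℝ,
      (∀ X : Matrix (Fin m) (Fin n) ℝ,
        ν * f X0 + (X0.rank : ℝ) ≤ ν * f X + (X.rank : ℝ)) ∧ X0.rank ≤ κ)
    (Ubar : Matrix (Fin m) (Fin κ) ℝ) (Vbar : Matrix (Fin n) (Fin κ) ℝ)
    (hmin : ∀ (U : Matrix (Fin m) (Fin κ) ℝ) (V : Matrix (Fin n) (Fin κ) ℝ),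
      ν * f (Ubar * Vbarᵀ) + (1 / 2) * ((l20 Ubar : ℝ) + (l20 Vbar : ℝ)) ≤
        ν * f (U * Vᵀ) + (1 / 2) * ((l20 U : ℝ) + (l20 V : ℝ))) :
    ∀ X : Matrix (Fin m) (Fin n) ℝ,
      ν * f (Ubar * Vbarᵀ) + ((Ubar * Vbarᵀ).rank : ℝ) ≤ ν * f X + (X.rank : ℝ) := by
  obtain ⟨X0, hX0min, hX0rank⟩ := hne
  obtain ⟨U0, V0, hfac, hU0, hV0⟩ := exists_factorization X0 hX0rank
  intro X
  have hU : ((Ubar * Vbarᵀ).rank : ℝ) ≤ (l20 Ubar : ℝ) := by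
    have : (Ubar * Vbarᵀ).rank ≤ l20 Ubar :=
      le_trans (Matrix.rank_mul_le_left Ubar Vbarᵀ) (rank_le_l20 Ubar)
    exact_mod_cast this
  have hV : ((Ubar * Vbarᵀ).rank : ℝ) ≤ (l20 Vbar : ℝ) := by
    have : (Ubar * Vbarᵀ).rank ≤ l20 Vbar := by
      calc (Ubar * Vbarᵀ).rank ≤ Vbarᵀ.rank := Matrix.rank_mul_le_right _ _
        _ = Vbar.rank := Matrix.rank_transpose _
        _ ≤ l20 Vbar := rank_le_l20 _
    exact_mod_cast this
  have h2 := hmin U0 V0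
  rw [← hfac] at h2
  have hU0' : (l20 U0 : ℝ) ≤ (X0.rank : ℝ) := by exact_mod_cast hU0
  have hV0' : (l20 V0 : ℝ) ≤ (X0.rank : ℝ) := by exact_mod_cast hV0
  have h4 := hX0min X
  linarith

end Paper
end
end

section
/- Let f : ℝ^{m×n} → ℝ be any function, ν, μ > 0, κ a positive integer, φ ∈ 𝓛 with minimizer t*_φ, F(U,V) = ν f(UVᵀ) + (μ/4)‖UᵀU − VᵀV‖_F², and for a matrix Z with κ columns let G(Z) = (‖Z_1‖,…,‖Z_κ‖)ᵀ. Consider problem (P): minimize Ψ(U,V) = F(U,V) + (1/2)(‖U‖_{2,0} + ‖V‖_{2,0}) over ℝ^{m×κ}×ℝ^{n×κ}; and problem (Q): minimize F(U,V) + (1/2)Σ_{i=1}^κ (φ(u_i) + φ(v_i)) over (U,u,V,v) subject to 0 ≤ u ≤ e, ⟨e − u, G(U)⟩ = 0, 0 ≤ v ≤ e, ⟨e − v, G(V)⟩ = 0. Then: (a) if (Ū,V̄) is a global optimal solution of (P), then (Ū,V̄,ū,v̄) with ū_i = 1 when Ū_i ≠ 0 and ū_i = t*_φ when Ū_i = 0,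 and v̄ defined analogously from V̄, is a global optimal solution of (Q); (b) if (Ū,V̄,ū,v̄) is a global optimal solution of (Q), then (Ū,V̄) is a global optimal solution of (P); and (c) the optimal values of (P) and (Q) are equal. -/
open scoped BigOperators

noncomputable section

namespace Paper

open Matrix

/-- The objective `Ψ` of the `ℓ_{2,0}`-regularized balanced factorization. -/
def Psi {m n κ : ℕ} (f : Matrix (Fin m) (Fin n) ℝ → ℝ) (ν μ : ℝ)
    (U : Matrix (Fin m) (Fin κ) ℝ) (V : Matrix (Fin n) (Fin κ) ℝ) : ℝ :=
  ν * f (U * Vᵀ) + (μ / 4) * (fnorm (Uᵀ * U - Vᵀ * V)) ^ 2 +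
    (1 / 2) * ((l20 U : ℝ) + (l20 V : ℝ))

/-- The smooth part `F` of the factored objective. -/
def Fobj {m n κ : ℕ} (f : Matrix (Fin m) (Fin n) ℝ → ℝ) (ν μ : ℝ)
    (U : Matrix (Fin m) (Fin κ) ℝ) (V : Matrix (Fin n) (Fin κ) ℝ) : ℝ :=
  ν * f (U * Vᵀ) + (μ / 4) * (fnorm (Uᵀ * U - Vᵀ * V)) ^ 2

/-- Feasibility of a weight vector `w` for a factor `Z` in the MPEC (3.5). -/
def Qfeas {a κ : ℕ} (Z : Matrix (Fin a) (Fin κ) ℝ) (w : Fin κ → ℝ) : Prop :=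
  (∀ i, 0 ≤ w i ∧ w i ≤ 1) ∧ (∑ i, (1 - w i) * colNorm Z i) = 0

/-- Objective of the MPEC (3.5). -/
def Qobj {m n κ : ℕ} (L : LFamily) (f : Matrix (Fin m) (Fin n) ℝ → ℝ) (ν μ : ℝ)
    (U : Matrix (Fin m) (Fin κ) ℝ) (u : Fin κ → ℝ)
    (V : Matrix (Fin n) (Fin κ) ℝ) (v : Fin κ → ℝ) : EReal :=
  ((Fobj f ν μ U V : ℝ) : EReal) +
    ((1 / 2 : ℝ) : EReal) * ∑ i, (L.phi (u i) + L.phi (v i))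

lemma colNorm_nonneg {a κ : ℕ} (Z : Matrix (Fin a) (Fin κ) ℝ) (i : Fin κ) :
    0 ≤ colNorm Z i := Real.sqrt_nonneg _

lemma colNorm_eq_zero_iff {a κ : ℕ} (Z : Matrix (Fin a) (Fin κ) ℝ) (i : Fin κ) :
    colNorm Z i = 0 ↔ (fun r => Z r i) = 0 := by
  unfold colNorm
  rw [Real.sqrt_eq_zero (by positivity)]
  constructor
  · intro h
    funext r
    have := (Finset.sum_eq_zero_iff_of_nonneg
      (fun r _ => sq_nonneg (Z r i))).1 h r (Finset.mem_univ r)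
    exact pow_eq_zero_iff two_ne_zero |>.1 this
  · intro h
    have : ∀ r, Z r i = 0 := fun r => congrFun h r
    simp [this]

lemma qfeas_w_eq_one {a κ : ℕ} {Z : Matrix (Fin a) (Fin κ) ℝ} {w : Fin κ → ℝ}
    (h : Qfeas Z w) (i : Fin κ) (hi : (fun r => Z r i) ≠ 0) : w i = 1 := by
  have ht : (1 - w i) * colNorm Z i = 0 :=
    (Finset.sum_eq_zero_iff_of_nonneg
      (fun j _ => mul_nonneg (by linarith [(h.1 j).2]) (colNorm_nonneg Z j))).1
      h.2 i (Finset.mem_univ i)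
  have hc : colNorm Z i ≠ 0 := fun hc => hi ((colNorm_eq_zero_iff Z i).1 hc)
  rcases mul_eq_zero.1 ht with h1 | h2
  · linarith
  · exact absurd h2 hc

open Classical in
lemma l20_eq_sum {a κ : ℕ} (Z : Matrix (Fin a) (Fin κ) ℝ) :
    (l20 Z : ℝ) = ∑ i : Fin κ, if (fun r => Z r i) ≠ 0 then (1 : ℝ) else 0 := by
  unfold l20
  rw [Set.ncard_eq_toFinset_card']
  rw [Finset.sum_ite, Finset.sum_const, Finset.sum_const]
  simp [Set.toFinset_setOf]

lemma ereal_coe_sum {α : Type*} (s : Finset α) (g : α → ℝ) :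
    ((∑ i ∈ s, g i : ℝ) : EReal) = ∑ i ∈ s, ((g i : ℝ) : EReal) :=
  map_sum (⟨⟨Real.toEReal, EReal.coe_zero⟩, EReal.coe_add⟩ : ℝ →+ EReal) g s

open Classical in
lemma sum_phi_ge {a κ : ℕ} (L : LFamily) {Z : Matrix (Fin a) (Fin κ) ℝ} {w : Fin κ → ℝ}
    (h : Qfeas Z w) :
    ((l20 Z : ℝ) : EReal) ≤ ∑ i : Fin κ, L.phi (w i) := by
  rw [l20_eq_sum, ereal_coe_sum]
  apply Finset.sum_le_sum
  intro i _
  by_cases hi : (fun r => Z r i) ≠ 0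
  · rw [if_pos hi, qfeas_w_eq_one h i hi, L.phi_one]
    simp
  · rw [if_neg hi, EReal.coe_zero]
    exact L.phi_nonneg (w i) ⟨(h.1 i).1, (h.1 i).2⟩

open Classical in
lemma canonical_spec {a κ : ℕ} (L : LFamily) (Z : Matrix (Fin a) (Fin κ) ℝ) {w : Fin κ → ℝ}
    (hcan : ∀ i : Fin κ, ((fun r => Z r i) ≠ 0 → w i = 1) ∧
      ((fun r => Z r i) = 0 → w i = L.tstar)) :
    Qfeas Z w ∧ ∑ i : Fin κ, L.phi (w i) = ((l20 Z : ℝ) : EReal) := by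
  have hw : ∀ i, 0 ≤ w i ∧ w i ≤ 1 := by
    intro i
    by_cases hi : (fun r => Z r i) = 0
    · rw [(hcan i).2 hi]; exact ⟨L.tstar_mem.1, L.tstar_mem.2⟩
    · rw [(hcan i).1 hi]; exact ⟨by norm_num, le_refl 1⟩
  refine ⟨⟨hw, ?_⟩, ?_⟩
  · apply Finset.sum_eq_zero
    intro i _
    by_cases hi : (fun r => Z r i) = 0
    · rw [(colNorm_eq_zero_iff Z i).2 hi, mul_zero]
    · rw [(hcan i).1 hi]; ring
  · rw [l20_eq_sum, ereal_coe_sum]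
    apply Finset.sum_congr rfl
    intro i _
    by_cases hi : (fun r => Z r i) = 0
    · simp only [hi, ne_eq, not_true_eq_false, if_false]
      rw [(hcan i).2 hi, L.phi_tstar, EReal.coe_zero]
    · simp only [ne_eq, hi, not_false_eq_true, if_true]
      rw [(hcan i).1 hi, L.phi_one, EReal.coe_one]

lemma half_mul_mono {x : ℝ} {S : EReal} (h : (x : EReal) ≤ S) :
    ((((1:ℝ)/2) * x : ℝ) : EReal) ≤ (((1:ℝ)/2 : ℝ) : EReal) * S := by
  induction S with
  | bot => exact absurd h (by simp)
  | coe s =>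
      rw [← EReal.coe_mul]
      exact EReal.coe_le_coe_iff.2 (by nlinarith [EReal.coe_le_coe_iff.1 h])
  | top =>
      rw [EReal.mul_top_of_pos (by norm_num)]
      exact le_top

lemma qobj_sum_split {m n κ : ℕ} (L : LFamily) (f : Matrix (Fin m) (Fin n) ℝ → ℝ) (ν μ : ℝ)
    (U : Matrix (Fin m) (Fin κ) ℝ) (u : Fin κ → ℝ)
    (V : Matrix (Fin n) (Fin κ) ℝ) (v : Fin κ → ℝ) :
    Qobj L f ν μ U u V v = ((Fobj f ν μ U V : ℝ) : EReal) +
      ((1/2 : ℝ) : EReal) * (∑ i : Fin κ, L.phi (u i) + ∑ i : Fin κ, L.phi (v i)) := by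
  unfold Qobj
  rw [Finset.sum_add_distrib]

lemma psi_le_qobj {m n κ : ℕ} (L : LFamily) (f : Matrix (Fin m) (Fin n) ℝ → ℝ) (ν μ : ℝ)
    {U : Matrix (Fin m) (Fin κ) ℝ} {u : Fin κ → ℝ}
    {V : Matrix (Fin n) (Fin κ) ℝ} {v : Fin κ → ℝ}
    (hU : Qfeas U u) (hV : Qfeas V v) :
    ((Psi f ν μ U V : ℝ) : EReal) ≤ Qobj L f ν μ U u V v := by
  rw [qobj_sum_split]
  have hsum : (((l20 U : ℝ) + (l20 V : ℝ) : ℝ) : EReal) ≤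
      ∑ i : Fin κ, L.phi (u i) + ∑ i : Fin κ, L.phi (v i) := by
    rw [EReal.coe_add]
    exact add_le_add (sum_phi_ge L hU) (sum_phi_ge L hV)
  have := half_mul_mono hsum
  have hPsi : Psi f ν μ U V = Fobj f ν μ U V + (1/2) * ((l20 U : ℝ) + (l20 V : ℝ)) := rfl
  rw [hPsi, EReal.coe_add]
  exact add_le_add le_rfl this

lemma qobj_canonical {m n κ : ℕ} (L : LFamily) (f : Matrix (Fin m) (Fin n) ℝ → ℝ) (ν μ : ℝ)
    {U : Matrix (Fin m) (Fin κ) ℝ} {u : Fin κ → ℝ}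
    {V : Matrix (Fin n) (Fin κ) ℝ} {v : Fin κ → ℝ}
    (hcu : ∀ i : Fin κ, ((fun r => U r i) ≠ 0 → u i = 1) ∧
      ((fun r => U r i) = 0 → u i = L.tstar))
    (hcv : ∀ i : Fin κ, ((fun r => V r i) ≠ 0 → v i = 1) ∧
      ((fun r => V r i) = 0 → v i = L.tstar)) :
    Qobj L f ν μ U u V v = ((Psi f ν μ U V : ℝ) : EReal) := by
  rw [qobj_sum_split, (canonical_spec L U hcu).2, (canonical_spec L V hcv).2]
  have hPsi : Psi f ν μ U V = Fobj f ν μ U V + (1/2) * ((l20 U : ℝ) + (l20 V : ℝ)) := rfl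
  rw [hPsi, EReal.coe_add, EReal.coe_mul, EReal.coe_add]

open Classical in
lemma exists_canonical {a κ : ℕ} (L : LFamily) (Z : Matrix (Fin a) (Fin κ) ℝ) :
    ∃ w : Fin κ → ℝ, ∀ i : Fin κ, ((fun r => Z r i) ≠ 0 → w i = 1) ∧
      ((fun r => Z r i) = 0 → w i = L.tstar) := by
  refine ⟨fun i => if (fun r => Z r i) = 0 then L.tstar else 1, fun i => ⟨?_, ?_⟩⟩
  · intro hi; simp [hi]
  · intro hi; simp [hi]

/-- equivalence of the `ℓ_{2,0}` regularized factorization (P) and its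
MPEC reformulation (Q). -/
theorem MPEC_equivalence
    {m n : ℕ} (f : Matrix (Fin m) (Fin n) ℝ → ℝ) (ν μ : ℝ)
    (hν : 0 < ν) (hμ : 0 < μ) (κ : ℕ) (hκ : 1 ≤ κ) (L : LFamily) :
    (∀ (Ubar : Matrix (Fin m) (Fin κ) ℝ) (Vbar : Matrix (Fin n) (Fin κ) ℝ)
        (ubar vbar : Fin κ → ℝ),
      (∀ (U : Matrix (Fin m) (Fin κ) ℝ) (V : Matrix (Fin n) (Fin κ) ℝ),
        Psi f ν μ Ubar Vbar ≤ Psi f ν μ U V) →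
      (∀ i : Fin κ, ((fun r => Ubar r i) ≠ 0 → ubar i = 1) ∧
        ((fun r => Ubar r i) = 0 → ubar i = L.tstar)) →
      (∀ i : Fin κ, ((fun r => Vbar r i) ≠ 0 → vbar i = 1) ∧
        ((fun r => Vbar r i) = 0 → vbar i = L.tstar)) →
      (Qfeas Ubar ubar ∧ Qfeas Vbar vbar ∧
        ∀ (U : Matrix (Fin m) (Fin κ) ℝ) (u : Fin κ → ℝ)
          (V : Matrix (Fin n) (Fin κ) ℝ) (v : Fin κ → ℝ),
          Qfeas U u → Qfeas V v →
          Qobj L f ν μ Ubar ubar Vbar vbar ≤ Qobj L f ν μ U u V v)) ∧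
    (∀ (Ubar : Matrix (Fin m) (Fin κ) ℝ) (ubar : Fin κ → ℝ)
        (Vbar : Matrix (Fin n) (Fin κ) ℝ) (vbar : Fin κ → ℝ),
      Qfeas Ubar ubar → Qfeas Vbar vbar →
      (∀ (U : Matrix (Fin m) (Fin κ) ℝ) (u : Fin κ → ℝ)
        (V : Matrix (Fin n) (Fin κ) ℝ) (v : Fin κ → ℝ),
        Qfeas U u → Qfeas V v →
        Qobj L f ν μ Ubar ubar Vbar vbar ≤ Qobj L f ν μ U u V v) →
      ∀ (U : Matrix (Fin m) (Fin κ) ℝ) (V : Matrix (Fin n) (Fin κ) ℝ),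
        Psi f ν μ Ubar Vbar ≤ Psi f ν μ U V) ∧
    (sInf {y : EReal | ∃ (U : Matrix (Fin m) (Fin κ) ℝ) (V : Matrix (Fin n) (Fin κ) ℝ),
        y = ((Psi f ν μ U V : ℝ) : EReal)} =
      sInf {y : EReal | ∃ (U : Matrix (Fin m) (Fin κ) ℝ) (u : Fin κ → ℝ)
          (V : Matrix (Fin n) (Fin κ) ℝ) (v : Fin κ → ℝ),
        Qfeas U u ∧ Qfeas V v ∧ y = Qobj L f ν μ U u V v}) := by
  have keyP : ∀ (U : Matrix (Fin m) (Fin κ) ℝ) (u : Fin κ → ℝ)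
      (V : Matrix (Fin n) (Fin κ) ℝ) (v : Fin κ → ℝ),
      Qfeas U u → Qfeas V v →
      ((Psi f ν μ U V : ℝ) : EReal) ≤ Qobj L f ν μ U u V v :=
    fun U u V v hU hV => psi_le_qobj L f ν μ hU hV
  refine ⟨?_, ?_, ?_⟩
  · intro Ubar Vbar ubar vbar hmin hcu hcv
    obtain ⟨hQU, hsU⟩ := canonical_spec L Ubar hcu
    obtain ⟨hQV, hsV⟩ := canonical_spec L Vbar hcv
    refine ⟨hQU, hQV, ?_⟩
    intro U u V v hU hV
    calc Qobj L f ν μ Ubar ubar Vbar vbar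
        = ((Psi f ν μ Ubar Vbar : ℝ) : EReal) := qobj_canonical L f ν μ hcu hcv
      _ ≤ ((Psi f ν μ U V : ℝ) : EReal) := EReal.coe_le_coe_iff.2 (hmin U V)
      _ ≤ Qobj L f ν μ U u V v := keyP U u V v hU hV
  · intro Ubar ubar Vbar vbar hQU hQV hmin U V
    obtain ⟨u, hcu⟩ := exists_canonical L U
    obtain ⟨v, hcv⟩ := exists_canonical L V
    have h1 : ((Psi f ν μ Ubar Vbar : ℝ) : EReal) ≤ Qobj L f ν μ Ubar ubar Vbar vbar :=
      keyP Ubar ubar Vbar vbar hQU hQV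
    have h2 : Qobj L f ν μ Ubar ubar Vbar vbar ≤ Qobj L f ν μ U u V v :=
      hmin U u V v (canonical_spec L U hcu).1 (canonical_spec L V hcv).1
    have h3 : Qobj L f ν μ U u V v = ((Psi f ν μ U V : ℝ) : EReal) :=
      qobj_canonical L f ν μ hcu hcv
    exact EReal.coe_le_coe_iff.1 (h1.trans (h2.trans_eq h3))
  · apply le_antisymm
    · apply le_sInf
      rintro y ⟨U, u, V, v, hU, hV, rfl⟩
      exact le_trans (sInf_le ⟨U, V, rfl⟩) (keyP U u V v hU hV)
    · apply le_sInf
      rintro y ⟨U, V, rfl⟩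
      obtain ⟨u, hcu⟩ := exists_canonical L U
      obtain ⟨v, hcv⟩ := exists_canonical L V
      exact sInf_le ⟨U, u, V, v, (canonical_spec L U hcu).1, (canonical_spec L V hcv).1,
        (qobj_canonical L f ν μ hcu hcv).symm⟩


end Paper
end
end

section
/- Let Ū ∈ ℝ^{m×κ} and V̄ ∈ ℝ^{n×κ} satisfy ŪᵀŪ = V̄ᵀV̄, let r = rank(ŪV̄ᵀ) ≥ 1, and suppose ‖Ū‖_{2,0} = ‖V̄‖_{2,0} = r. Then: (a) ‖Ū_j‖ = ‖V̄_j‖ for every column index j, so the sets of nonzero columns of Ū and V̄ coincide; and (b) for every j with Ū_j ≠ 0, ‖Ū_j‖ ≥ √(σ_r(ŪV̄ᵀ)), where σ_r denotes the r-th largest singular value. -/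
open scoped BigOperators

noncomputable section

namespace Paper

open Matrix

section AuxStatement11

open Finset

private lemma sum_sq_eq_zero_iff' {p : ℕ} (y : Fin p → ℝ) :
    (∑ i, (y i) ^ 2 = 0) ↔ y = 0 := by
  rw [Finset.sum_eq_zero_iff_of_nonneg (fun i _ => sq_nonneg _)]
  constructor
  · intro h; funext i
    have := h i (Finset.mem_univ i)
    exact pow_eq_zero_iff (n := 2) (by norm_num) |>.mp this
  · intro h i _; rw [h]; simp

private lemma spec_ineq' {m : ℕ} (M : Matrix (Fin m) (Fin m) ℝ) (hM : M.IsHermitian)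
    (μ0 : ℝ) (hnn : ∀ i, 0 ≤ hM.eigenvalues i)
    (hmin : ∀ i, hM.eigenvalues i ≠ 0 → μ0 ≤ hM.eigenvalues i)
    (z : Fin m → ℝ) :
    μ0 * (z ⬝ᵥ (M *ᵥ z)) ≤ (M *ᵥ z) ⬝ᵥ (M *ᵥ z) := by
  classical
  set μ := hM.eigenvalues with hμ
  set b := hM.eigenvectorBasis with hb
  have hMt : Mᵀ = M := by
    rw [← Matrix.conjTranspose_eq_transpose_of_trivial]; exact hM
  set z' : EuclideanSpace ℝ (Fin m) := WithLp.toLp 2 z with hz'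
  set Mz : EuclideanSpace ℝ (Fin m) := WithLp.toLp 2 (M *ᵥ z) with hMz
  have hinner : ∀ x y : EuclideanSpace ℝ (Fin m), (inner ℝ x y : ℝ) = ∑ i, x i * y i := by
    intro x y
    simp [PiLp.inner_apply, RCLike.inner_apply, mul_comm]
  have hrepr : ∀ i, b.repr Mz i = μ i * b.repr z' i := by
    intro i
    rw [OrthonormalBasis.repr_apply_apply, OrthonormalBasis.repr_apply_apply]
    have h1 : M *ᵥ (b i : EuclideanSpace ℝ (Fin m)) = μ i • (b i : EuclideanSpace ℝ (Fin m)) :=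
      hM.mulVec_eigenvectorBasis i
    rw [hinner, hinner]
    calc ∑ k, (b i : EuclideanSpace ℝ (Fin m)) k * Mz k
        = (fun k => (b i : EuclideanSpace ℝ (Fin m)) k) ⬝ᵥ (M *ᵥ z) := rfl
      _ = (M *ᵥ fun k => (b i : EuclideanSpace ℝ (Fin m)) k) ⬝ᵥ z := by
          rw [Matrix.dotProduct_mulVec, ← hMt, Matrix.vecMul_transpose, hMt]
      _ = μ i * ∑ k, (b i : EuclideanSpace ℝ (Fin m)) k * z' k := by
          rw [show (M *ᵥ fun k => (b i : EuclideanSpace ℝ (Fin m)) k)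
              = μ i • (fun k => (b i : EuclideanSpace ℝ (Fin m)) k) from h1]
          simp only [smul_dotProduct, dotProduct, Finset.mul_sum,
            Pi.smul_apply, smul_eq_mul]
          exact Finset.sum_congr rfl fun k _ => by ring
  have e1 : z ⬝ᵥ (M *ᵥ z) = ∑ i, b.repr z' i * (μ i * b.repr z' i) := by
    have : z ⬝ᵥ (M *ᵥ z) = (inner ℝ z' Mz : ℝ) := by rw [hinner]; rfl
    rw [this, ← b.repr.inner_map_map z' Mz, hinner]
    exact Finset.sum_congr rfl fun i _ => by rw [hrepr]
  have e2 : (M *ᵥ z) ⬝ᵥ (M *ᵥ z) = ∑ i, (μ i * b.repr z' i) * (μ i * b.repr z' i) := by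
    have : (M *ᵥ z) ⬝ᵥ (M *ᵥ z) = (inner ℝ Mz Mz : ℝ) := by rw [hinner]; rfl
    rw [this, ← b.repr.inner_map_map Mz Mz, hinner]
    exact Finset.sum_congr rfl fun i _ => by rw [hrepr]
  rw [e1, e2, Finset.mul_sum]
  apply Finset.sum_le_sum
  intro i _
  rcases eq_or_ne (μ i) 0 with h | h
  · simp [h]
  · have h1 : μ0 ≤ μ i := hmin i h
    have h2 : 0 ≤ μ i := hnn i
    nlinarith [mul_le_mul_of_nonneg_right h1 (mul_nonneg h2 (sq_nonneg (b.repr z' i)))]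

private lemma sorted_min_pos' {m r : ℕ} (μ : Fin m → ℝ) (hnn : ∀ i, 0 ≤ μ i)
    (hcard : Fintype.card {i // μ i ≠ 0} = r) (hrm : r ≤ m) (hrr : r - 1 < m) :
    ∀ i, μ i ≠ 0 → μ (Tuple.sort μ (Fin.rev ⟨r - 1, hrr⟩)) ≤ μ i := by
  classical
  set σ := Tuple.sort μ with hσ
  have hmono : Monotone (μ ∘ σ) := Tuple.monotone_sort μ
  have hcard' : (Finset.univ.filter (fun i => μ (σ i) ≠ 0)).card = r := by
    rw [← Fintype.card_subtype, ← hcard]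
    exact Fintype.card_congr (σ.subtypeEquiv fun i => Iff.rfl)
  have key : ∀ q : Fin m, μ (σ q) ≠ 0 → m - r ≤ (q : ℕ) := by
    intro q hq
    by_contra hlt
    push_neg at hlt
    have hsub : Finset.Ici q ⊆ Finset.univ.filter (fun i => μ (σ i) ≠ 0) := by
      intro a ha
      simp only [Finset.mem_filter, Finset.mem_univ, true_and]
      have h1 : μ (σ q) ≤ μ (σ a) := hmono (Finset.mem_Ici.mp ha)
      have hq' : 0 < μ (σ q) := lt_of_le_of_ne (hnn _) (Ne.symm hq)
      exact ne_of_gt (lt_of_lt_of_le hq' h1)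
    have := Finset.card_le_card hsub
    rw [Fin.card_Ici, hcard'] at this
    omega
  intro i hi
  have hgi : μ (σ (σ.symm i)) ≠ 0 := by rwa [Equiv.apply_symm_apply]
  have h1 : m - r ≤ ((σ.symm i : Fin m) : ℕ) := key _ hgi
  have h2 : ((Fin.rev ⟨r - 1, hrr⟩ : Fin m) : ℕ) = m - r := by
    rw [Fin.val_rev]
    show m - (r - 1 + 1) = m - r
    omega
  have h3 : (Fin.rev ⟨r - 1, hrr⟩ : Fin m) ≤ σ.symm i := by
    rw [Fin.le_def, h2]; exact h1
  calc μ (σ (Fin.rev ⟨r - 1, hrr⟩)) ≤ μ (σ (σ.symm i)) := hmono h3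
    _ = μ i := by rw [Equiv.apply_symm_apply]

private lemma exists_orthogonal' {m n κ : ℕ} (X : Matrix (Fin m) (Fin n) ℝ)
    (r : ℕ) (hr : X.rank = r) (hr1 : 1 ≤ r) (V : Matrix (Fin n) (Fin κ) ℝ)
    (S' : Finset (Fin κ)) (hS' : S'.card = r - 1) :
    ∃ z : Fin m → ℝ, Xᵀ *ᵥ z ≠ 0 ∧ ∀ k ∈ S', (Vᵀ *ᵥ (Xᵀ *ᵥ z)) k = 0 := by
  classical
  by_contra hcon
  push_neg at hcon
  have hker : ∀ z : Fin m → ℝ, (∀ k ∈ S', (Vᵀ *ᵥ (Xᵀ *ᵥ z)) k = 0) → Xᵀ *ᵥ z = 0 := by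
    intro z hz
    by_contra hz0
    obtain ⟨k, hk, hk0⟩ := hcon z hz0
    exact hk0 (hz k hk)
  set L : (Fin m → ℝ) →ₗ[ℝ] ({k // k ∈ S'} → ℝ) :=
    (LinearMap.funLeft ℝ ℝ (fun k : {k // k ∈ S'} => (k : Fin κ))) ∘ₗ
      (Vᵀ).mulVecLin ∘ₗ (Xᵀ).mulVecLin with hL
  have hkerle : LinearMap.ker L ≤ LinearMap.ker (Xᵀ).mulVecLin := by
    intro z hz
    rw [LinearMap.mem_ker] at hz ⊢
    rw [Matrix.mulVecLin_apply]
    apply hker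
    intro k hk
    have := congrFun hz ⟨k, hk⟩
    simpa only [hL, LinearMap.coe_comp, Function.comp_apply, LinearMap.funLeft_apply,
      Matrix.mulVecLin_apply, Pi.zero_apply] using this
  have h1 := LinearMap.finrank_range_add_finrank_ker L
  have h2 := LinearMap.finrank_range_add_finrank_ker (Xᵀ).mulVecLin
  have h3 : Module.finrank ℝ (LinearMap.range (Xᵀ).mulVecLin) = r := by
    rw [show Module.finrank ℝ (LinearMap.range (Xᵀ).mulVecLin) = Xᵀ.rank from rfl,
      Matrix.rank_transpose, hr]
  have h4 : Module.finrank ℝ (LinearMap.range L) ≤ r - 1 := by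
    have := Submodule.finrank_le (LinearMap.range L)
    rw [Module.finrank_fintype_fun_eq_card, Fintype.card_coe, hS'] at this
    exact this
  have h5 : Module.finrank ℝ (LinearMap.ker L)
      ≤ Module.finrank ℝ (LinearMap.ker (Xᵀ).mulVecLin) :=
    Submodule.finrank_mono hkerle
  rw [Module.finrank_fintype_fun_eq_card, Fintype.card_fin] at h1 h2
  omega

end AuxStatement11

/-- columns of balanced factors have equal norms, and nonzero columns
have norm at least `√σ_r`. -/
theorem balanced_factor_column_norms
    {m n κ : ℕ} (Ubar : Matrix (Fin m) (Fin κ) ℝ) (Vbar : Matrix (Fin n) (Fin κ) ℝ)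
    (hbal : Ubarᵀ * Ubar = Vbarᵀ * Vbar)
    (r : ℕ) (hr : (Ubar * Vbarᵀ).rank = r) (hr1 : 1 ≤ r)
    (hU : l20 Ubar = r) (hV : l20 Vbar = r) :
    (∀ j : Fin κ, colNorm Ubar j = colNorm Vbar j) ∧
    ({j : Fin κ | (fun i => Ubar i j) ≠ 0} = {j : Fin κ | (fun i => Vbar i j) ≠ 0}) ∧
    (∀ j : Fin κ, (fun i => Ubar i j) ≠ 0 →
      Real.sqrt (singularValue r (Ubar * Vbarᵀ)) ≤ colNorm Ubar j) := by
  classical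
  have hdiag : ∀ j : Fin κ, ∑ i, (Ubar i j) ^ 2 = ∑ i, (Vbar i j) ^ 2 := by
    intro j
    have h := congrFun (congrFun hbal j) j
    simp only [Matrix.mul_apply, Matrix.transpose_apply] at h
    simpa [sq] using h
  have hcolset : ∀ j : Fin κ, ((fun i => Ubar i j) ≠ 0 ↔ (fun i => Vbar i j) ≠ 0) := by
    intro j
    exact not_congr (by rw [← sum_sq_eq_zero_iff' (fun i => Ubar i j),
      ← sum_sq_eq_zero_iff' (fun i => Vbar i j), hdiag j])
  refine ⟨fun j => by rw [colNorm, colNorm, hdiag j], Set.ext fun j => hcolset j, ?_⟩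
  intro j hj
  set X := Ubar * Vbarᵀ with hX
  have hrm : r ≤ m := by rw [← hr]; exact X.rank_le_height
  have hm1 : r - 1 < m := by omega
  set hM := Matrix.isHermitian_mul_conjTranspose_self X with hMdef
  set μ := hM.eigenvalues with hμ
  have hnn : ∀ i, 0 ≤ μ i := fun i =>
    (Matrix.posSemidef_self_mul_conjTranspose X).eigenvalues_nonneg i
  have hcard : Fintype.card {i // μ i ≠ 0} = r := by
    rw [hμ, ← Matrix.IsHermitian.rank_eq_card_non_zero_eigs hM,
      Matrix.rank_self_mul_conjTranspose, hr]
  set i0 := Tuple.sort μ (Fin.rev ⟨r - 1, hm1⟩) with hi0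
  have hmin : ∀ i, μ i ≠ 0 → μ i0 ≤ μ i := sorted_min_pos' μ hnn hcard hrm hm1
  have hsv : singularValue r X = Real.sqrt (μ i0) := by
    rw [singularValue, dif_pos ⟨hr1, hrm⟩]
    rfl
  set S := Finset.univ.filter (fun k : Fin κ => (fun i => Ubar i k) ≠ 0) with hS
  have hScard : S.card = r := by
    have hset : {k : Fin κ | (fun i => Ubar i k) ≠ 0} = ↑S := by ext k; simp [hS]
    have := hU
    rw [l20, hset, Set.ncard_coe_finset] at this
    exact this
  have hjS : j ∈ S := by simp [hS, hj]
  set S' := S.erase j with hS'def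
  have hS'card : S'.card = r - 1 := by rw [hS'def, Finset.card_erase_of_mem hjS, hScard]
  obtain ⟨z, hw0, horth⟩ := exists_orthogonal' X r hr hr1 Vbar S' hS'card
  set w := Xᵀ *ᵥ z with hwdef
  set y := Vbarᵀ *ᵥ w with hy
  have hXw : X *ᵥ w = fun i => y j * Ubar i j := by
    funext i
    rw [hX, ← Matrix.mulVec_mulVec]
    show ∑ k, Ubar i k * y k = y j * Ubar i j
    rw [Finset.sum_eq_single j]
    · ring
    · intro k _ hkj
      by_cases hkS : k ∈ S
      · have hk' : k ∈ S' := Finset.mem_erase.mpr ⟨hkj, hkS⟩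
        have : y k = 0 := horth k hk'
        rw [this]; ring
      · have hcol : (fun i => Ubar i k) = 0 := by
          by_contra hcol
          exact hkS (by simp [hS, hcol])
        have h0 : Ubar i k = 0 := by simpa using congrFun hcol i
        rw [h0]; ring
    · intro h; exact absurd (Finset.mem_univ j) h
  set A := ∑ i, (Ubar i j) ^ 2 with hA
  have hApos : 0 < A := by
    rcases Function.ne_iff.mp hj with ⟨i, hi⟩
    have hi' : Ubar i j ≠ 0 := by simpa using hi
    exact Finset.sum_pos' (fun k _ => sq_nonneg _)
      ⟨i, Finset.mem_univ i, lt_of_le_of_ne (sq_nonneg _) (Ne.symm (pow_ne_zero 2 hi'))⟩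
  have hsw : 0 < ∑ i, (w i) ^ 2 := by
    rcases Function.ne_iff.mp hw0 with ⟨i, hi⟩
    have hi' : w i ≠ 0 := by simpa using hi
    exact Finset.sum_pos' (fun k _ => sq_nonneg _)
      ⟨i, Finset.mem_univ i, lt_of_le_of_ne (sq_nonneg _) (Ne.symm (pow_ne_zero 2 hi'))⟩
  have hCS : (y j) ^ 2 ≤ A * (∑ i, (w i) ^ 2) := by
    have hyj : y j = ∑ i, Vbar i j * w i := rfl
    calc (y j) ^ 2 = (∑ i, Vbar i j * w i) ^ 2 := by rw [hyj]
      _ ≤ (∑ i, (Vbar i j) ^ 2) * (∑ i, (w i) ^ 2) :=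
          Finset.sum_mul_sq_le_sq_mul_sq _ _ _
      _ = A * (∑ i, (w i) ^ 2) := by rw [← hdiag j]
  have hspec := spec_ineq' (X * Xᴴ) hM (μ i0) hnn hmin z
  have hXt : Xᴴ = Xᵀ := Matrix.conjTranspose_eq_transpose_of_trivial X
  have hMv : (X * Xᴴ) *ᵥ z = X *ᵥ w := by rw [hXt, ← Matrix.mulVec_mulVec]
  have hzMz : z ⬝ᵥ ((X * Xᴴ) *ᵥ z) = ∑ i, (w i) ^ 2 := by
    rw [hMv, Matrix.dotProduct_mulVec, ← Matrix.mulVec_transpose]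
    show w ⬝ᵥ w = _
    simp [dotProduct, sq]
  have hXwXw : (X *ᵥ w) ⬝ᵥ (X *ᵥ w) = (y j) ^ 2 * A := by
    rw [hXw]
    show ∑ i, (y j * Ubar i j) * (y j * Ubar i j) = _
    rw [hA, Finset.mul_sum]
    exact Finset.sum_congr rfl fun i _ => by ring
  have hkey : μ i0 ≤ A ^ 2 := by
    rw [hMv] at hspec
    rw [hMv] at hzMz
    rw [hzMz, hXwXw] at hspec
    have h2 : (y j) ^ 2 * A ≤ (A * ∑ i, (w i) ^ 2) * A :=
      mul_le_mul_of_nonneg_right hCS hApos.le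
    have h3 : μ i0 * (∑ i, (w i) ^ 2) ≤ A ^ 2 * (∑ i, (w i) ^ 2) := by nlinarith
    exact le_of_mul_le_mul_right (by linarith) hsw
  have hsv2 : singularValue r X ≤ A := by
    rw [hsv]
    calc Real.sqrt (μ i0) ≤ Real.sqrt (A ^ 2) := Real.sqrt_le_sqrt hkey
      _ = A := Real.sqrt_sq hApos.le
  calc Real.sqrt (singularValue r X) ≤ Real.sqrt A := Real.sqrt_le_sqrt hsv2
    _ = colNorm Ubar j := by rw [colNorm, hA]


end Paper
end
end
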